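/- arXiv:2512.21751 — 4 statements merged into one kernel-verified Lean document; each statement's English description precedes it below -/
import Mathlib

section
/- Let V be a real inner product space with two inner products g and h, let e₁,…,eₙ be an h-orthonormal basis, and suppose |g(eᵢ,eⱼ) − δᵢⱼ| ≤ δ with nδ < 1. Then for every v ∈ V, √(1 − nδ)·‖v‖_h ≤ ‖v‖_g ≤ √(1 + nδ)·‖v‖_h, where ‖v‖_g = √(g(v,v)) and ‖v‖_h = √(h(v,v)). -/
/-- If `e` is an `h`-orthonormal basis, `|g(eᵢ,eⱼ) − δᵢⱼ| ≤ δ` and `nδ < 1`,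
then `√(1 − nδ)·‖v‖ₕ ≤ ‖v‖_g ≤ √(1 + nδ)·‖v‖ₕ`. -/
theorem stmt_1 {V : Type*} [AddCommGroup V] [Module ℝ V]
    (n : ℕ) (g h : LinearMap.BilinForm ℝ V)
    (hgsymm : g.IsSymm) (hhsymm : h.IsSymm)
    (hgpos : ∀ v : V, v ≠ 0 → 0 < g v v)
    (hhpos : ∀ v : V, v ≠ 0 → 0 < h v v)
    (e : Module.Basis (Fin n) ℝ V)
    (horth : ∀ i j, h (e i) (e j) = if i = j then 1 else 0)
    (δ : ℝ) (hδ : 0 ≤ δ) (hδn : n * δ < 1)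
    (hclose : ∀ i j, |g (e i) (e j) - (if i = j then (1:ℝ) else 0)| ≤ δ) :
    ∀ v : V, Real.sqrt (1 - n * δ) * Real.sqrt (h v v) ≤ Real.sqrt (g v v)
      ∧ Real.sqrt (g v v) ≤ Real.sqrt (1 + n * δ) * Real.sqrt (h v v) := by
  intro v
  set c : Fin n → ℝ := fun i => e.repr v i with hcdef
  have hv : v = ∑ i, c i • e i := (e.sum_repr v).symm
  have expand : ∀ B : LinearMap.BilinForm ℝ V,
      B v v = ∑ i, ∑ j, c i * c j * B (e i) (e j) := by
    intro B
    conv_lhs => rw [hv]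
    simp only [map_sum, LinearMap.sum_apply, map_smul, LinearMap.smul_apply, smul_eq_mul]
    rw [Finset.sum_comm]
    refine Finset.sum_congr rfl fun i _ => ?_
    rw [Finset.mul_sum]
    exact Finset.sum_congr rfl fun j _ => by ring
  have hh : h v v = ∑ i, c i * c i := by
    rw [expand h]
    refine Finset.sum_congr rfl fun i _ => ?_
    rw [Finset.sum_eq_single i]
    · simp [horth]
    · intro j _ hj; simp [horth, Ne.symm hj]
    · simp
  have hg : g v v = ∑ i, ∑ j, c i * c j * g (e i) (e j) := expand g
  have hdiff : g v v - h v v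
      = ∑ i, ∑ j, c i * c j * (g (e i) (e j) - if i = j then 1 else 0) := by
    rw [hg, hh, ← Finset.sum_sub_distrib]
    refine Finset.sum_congr rfl fun i _ => ?_
    simp only [mul_sub, Finset.sum_sub_distrib]
    congr 1
    simp [mul_ite, mul_one, mul_zero, Finset.sum_ite_eq]
  have h1 : |g v v - h v v| ≤ ∑ i, ∑ j, |c i| * |c j| * δ := by
    rw [hdiff]
    calc |∑ i, ∑ j, c i * c j * (g (e i) (e j) - if i = j then 1 else 0)|
        ≤ ∑ i, |∑ j, c i * c j * (g (e i) (e j) - if i = j then 1 else 0)| :=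
          Finset.abs_sum_le_sum_abs _ _
      _ ≤ ∑ i, ∑ j, |c i| * |c j| * δ := by
          refine Finset.sum_le_sum fun i _ => ?_
          calc |∑ j, c i * c j * (g (e i) (e j) - if i = j then 1 else 0)|
              ≤ ∑ j, |c i * c j * (g (e i) (e j) - if i = j then 1 else 0)| :=
                Finset.abs_sum_le_sum_abs _ _
            _ ≤ ∑ j, |c i| * |c j| * δ := by
                refine Finset.sum_le_sum fun j _ => ?_
                rw [abs_mul, abs_mul]
                exact mul_le_mul_of_nonneg_left (hclose i j)
                  (mul_nonneg (abs_nonneg _) (abs_nonneg _))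
  have h3 : ∑ i, ∑ j, |c i| * |c j| * δ = (∑ i, |c i|) ^ 2 * δ := by
    rw [sq, Finset.sum_mul_sum, Finset.sum_mul]
    exact Finset.sum_congr rfl fun i _ => (Finset.sum_mul _ _ _).symm
  have h2 : (∑ i, |c i|) ^ 2 ≤ (n : ℝ) * ∑ i, c i * c i := by
    have := Finset.sum_mul_sq_le_sq_mul_sq Finset.univ (fun _ => (1 : ℝ)) (fun i => |c i|)
    simpa [sq_abs, Finset.card_univ, ← sq] using this
  have habs : |g v v - h v v| ≤ (n : ℝ) * δ * h v v := by
    calc |g v v - h v v| ≤ (∑ i, |c i|) ^ 2 * δ := by rw [← h3]; exact h1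
      _ ≤ ((n : ℝ) * ∑ i, c i * c i) * δ := mul_le_mul_of_nonneg_right h2 hδ
      _ = (n : ℝ) * δ * h v v := by rw [hh]; ring
  have hhnn : 0 ≤ h v v := by
    rcases eq_or_ne v 0 with rfl | hv0
    · simp
    · exact (hhpos v hv0).le
  have hab := abs_le.mp habs
  have hlow : (1 - n * δ) * h v v ≤ g v v := by nlinarith [hab.1]
  have hhigh : g v v ≤ (1 + n * δ) * h v v := by nlinarith [hab.2]
  constructor
  · rw [← Real.sqrt_mul (by linarith)]
    exact Real.sqrt_le_sqrt hlow
  · have hnd : (0:ℝ) ≤ n * δ := mul_nonneg (Nat.cast_nonneg n) hδ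
    rw [← Real.sqrt_mul (by linarith)]
    exact Real.sqrt_le_sqrt hhigh
end

section
/- Let u ∈ C_c^1(ℝⁿ) be compactly supported. Then for every x, u(x) = (1/(n ω_n)) Σᵢ ∫_{ℝⁿ} (xᵢ − yᵢ) (∂ᵢu)(y) / |x − y|ⁿ dy, and consequently |u(x)| ≤ (1/(n ω_n)) ∫_{ℝⁿ} |∇u(y)| / |x − y|^{n−1} dy. -/
open Set Function Metric MeasureTheory Filter Module
open scoped ENNReal Topology NNReal

noncomputable section

namespace Stmt9

variable {E : Type*} [NormedAddCommGroup E] [NormedSpace ℝ E] [MeasurableSpace E]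
  [BorelSpace E] [FiniteDimensional ℝ E]
  [Nontrivial E] (μ : Measure E) [μ.IsAddHaarMeasure]

lemma comp_homeo (f : E → ℝ) :
    (fun p : sphere (0 : E) 1 × Ioi (0 : ℝ) => f ((p.2 : ℝ) • (p.1 : E)))
      ∘ (homeomorphUnitSphereProd E) = f ∘ (Subtype.val : ({0}ᶜ : Set E) → E) := by
  funext v
  have hv : (v : E) ≠ 0 := v.2
  simp [smul_inv_smul₀ (norm_ne_zero_iff.2 hv)]

lemma integrable_transfer (f : E → ℝ) :
    Integrable f μ ↔
      Integrable (fun p : sphere (0 : E) 1 × Ioi (0 : ℝ) => f ((p.2 : ℝ) • (p.1 : E)))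
        (μ.toSphere.prod (.volumeIoiPow (finrank ℝ E - 1))) := by
  have h0 : MeasurableSet ({0}ᶜ : Set E) := (measurableSet_singleton 0).compl
  calc Integrable f μ ↔ Integrable f (μ.restrict {0}ᶜ) := by
        rw [MeasureTheory.restrict_compl_singleton]
    _ ↔ Integrable (f ∘ (Subtype.val : ({0}ᶜ : Set E) → E)) (μ.comap Subtype.val) := by
        rw [← map_comap_subtype_coe h0,
          (MeasurableEmbedding.subtype_coe h0).integrable_map_iff]
    _ ↔ _ := by
        rw [← comp_homeo f]
        exact (μ.measurePreserving_homeomorphUnitSphereProd).integrable_comp_emb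
          (Homeomorph.measurableEmbedding _)

lemma integral_transfer (f : E → ℝ) :
    ∫ y, f y ∂μ =
      ∫ p : sphere (0 : E) 1 × Ioi (0 : ℝ), f ((p.2 : ℝ) • (p.1 : E))
        ∂(μ.toSphere.prod (.volumeIoiPow (finrank ℝ E - 1))) := by
  have h0 : MeasurableSet ({0}ᶜ : Set E) := (measurableSet_singleton 0).compl
  calc ∫ y, f y ∂μ = ∫ y in {0}ᶜ, f y ∂μ := by rw [MeasureTheory.restrict_compl_singleton]
    _ = ∫ v : ({0}ᶜ : Set E), f v ∂(μ.comap Subtype.val) := (integral_subtype_comap h0 f).symm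
    _ = _ := by
        rw [← (μ.measurePreserving_homeomorphUnitSphereProd).integral_comp
          (Homeomorph.measurableEmbedding _)
          (fun p : sphere (0 : E) 1 × Ioi (0 : ℝ) => f ((p.2 : ℝ) • (p.1 : E)))]
        exact integral_congr_ae (ae_of_all _ fun v => (congrFun (comp_homeo f) v).symm)

lemma integral_volumeIoiPow (m : ℕ) (f : ℝ → ℝ) :
    ∫ r : Ioi (0 : ℝ), f r ∂(Measure.volumeIoiPow m)
      = ∫ r in Ioi (0 : ℝ), r ^ m • f r := by
  simp only [Measure.volumeIoiPow, ENNReal.ofReal]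
  rw [integral_withDensity_eq_integral_smul
      (by exact (measurable_subtype_coe.pow_const _).real_toNNReal) _,
    integral_subtype_comap measurableSet_Ioi fun a : ℝ => Real.toNNReal (a ^ m) • f a,
    setIntegral_congr_fun measurableSet_Ioi fun x hx => ?_]
  rw [NNReal.smul_def, Real.coe_toNNReal _ (pow_nonneg hx.out.le _)]


lemma integrable_G (m : ℕ) (R : ℝ) :
    Integrable (fun r : Ioi (0 : ℝ) => (Ioo (0 : ℝ) R).indicator (fun t => (t ^ m)⁻¹) r)
      (Measure.volumeIoiPow m) := by
  simp only [Measure.volumeIoiPow, ENNReal.ofReal]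
  rw [integrable_withDensity_iff_integrable_smul
      (by exact (measurable_subtype_coe.pow_const _).real_toNNReal)]
  have hemb := MeasurableEmbedding.subtype_coe (measurableSet_Ioi (a := (0:ℝ)))
  rw [show (Measure.comap Subtype.val volume : Measure (Ioi (0:ℝ)))
      = Measure.comap Subtype.val volume from rfl]
  have : Integrable ((fun t : ℝ => (Ioo (0 : ℝ) R).indicator (fun _ => (1:ℝ)) t) ∘
      (Subtype.val : Ioi (0:ℝ) → ℝ)) (Measure.comap Subtype.val volume) := by
    rw [← hemb.integrable_map_iff, map_comap_subtype_coe measurableSet_Ioi]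
    exact (integrable_indicator_iff measurableSet_Ioo).2
      (integrableOn_const (lt_of_le_of_lt (Measure.restrict_apply_le _ _)
        measure_Ioo_lt_top).ne)
  refine this.congr (ae_of_all _ fun r => ?_)
  rcases le_or_gt R r.1 with h | h
  · have hmem : r.1 ∉ Ioo (0:ℝ) R := fun hr => absurd hr.2 (not_lt.2 h)
    simp [indicator_of_notMem hmem]
  · have hr0 : (0:ℝ) < r.1 := r.2
    have hmem : r.1 ∈ Ioo (0:ℝ) R := ⟨hr0, h⟩
    simp [indicator_of_mem hmem, NNReal.smul_def,
      Real.coe_toNNReal _ (pow_nonneg hr0.le _),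
      mul_inv_cancel₀ (pow_ne_zero m hr0.ne')]

lemma integrableOn_inv_norm_pow (R : ℝ) :
    IntegrableOn (fun y : E => (‖y‖ ^ (finrank ℝ E - 1))⁻¹) (ball 0 R) μ := by
  rw [← integrable_indicator_iff measurableSet_ball, integrable_transfer μ]
  have heq : ∀ p : sphere (0 : E) 1 × Ioi (0 : ℝ),
      (ball (0:E) R).indicator (fun y => (‖y‖ ^ (finrank ℝ E - 1))⁻¹) ((p.2 : ℝ) • (p.1 : E))
      = (Ioo (0 : ℝ) R).indicator (fun t => (t ^ (finrank ℝ E - 1))⁻¹) p.2 := by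
    rintro ⟨⟨w, hw⟩, ⟨r, hr⟩⟩
    rw [mem_sphere_zero_iff_norm] at hw
    rw [mem_Ioi] at hr
    have hnorm : ‖r • w‖ = r := by rw [norm_smul, hw, mul_one, Real.norm_eq_abs, abs_of_pos hr]
    by_cases h : r < R
    · rw [indicator_of_mem (by rw [mem_ball_zero_iff, hnorm]; exact h),
        indicator_of_mem (mem_Ioo.2 ⟨hr, h⟩), hnorm]
    · rw [indicator_of_notMem (by rw [mem_ball_zero_iff, hnorm]; exact h),
        indicator_of_notMem (fun hm => h hm.2)]
  refine ((integrable_const (1:ℝ)).smul_prod (integrable_G (finrank ℝ E - 1) R)).congr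
    (ae_of_all _ fun p => ?_)
  simp only [smul_eq_mul, one_mul]
  exact (heq p).symm


lemma integrable_mul_inv_norm_pow (g : E → ℝ) (hg : Continuous g)
    (hgc : HasCompactSupport g) (x : E) :
    Integrable (fun y => g y * (‖x - y‖ ^ (finrank ℝ E - 1))⁻¹) μ := by
  obtain ⟨C, hC⟩ : ∃ C, ∀ y, |g y| ≤ C := by
    simpa [Real.norm_eq_abs] using hg.norm.bounded_above_of_compact_support hgc.norm
  obtain ⟨R₀, hR₀⟩ : ∃ R₀, tsupport g ⊆ closedBall 0 R₀ :=
    hgc.isBounded.subset_closedBall 0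
  set m := finrank ℝ E - 1 with hm
  set R : ℝ := ‖x‖ + R₀ + 1 with hR
  have hIball : IntegrableOn (fun y : E => (‖x - y‖ ^ m)⁻¹) (ball x R) μ := by
    have h1 : Integrable (fun y : E =>
        (ball (0:E) R).indicator (fun z => (‖z‖ ^ m)⁻¹) (x - y)) μ := by
      have := (integrable_indicator_iff measurableSet_ball).2
        (integrableOn_inv_norm_pow μ R)
      exact this.comp_sub_left x
    rw [← integrable_indicator_iff measurableSet_ball]
    refine h1.congr (ae_of_all _ fun y => ?_)
    by_cases h : dist y x < R
    · have hxy : x - y ∈ ball (0:E) R := by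
        rw [mem_ball_zero_iff, ← dist_eq_norm, dist_comm]; exact h
      simp only [indicator_of_mem hxy, indicator_of_mem (mem_ball.2 h)]
    · have hxy : x - y ∉ ball (0:E) R := by
        rw [mem_ball_zero_iff, ← dist_eq_norm, dist_comm]; exact h
      simp only [indicator_of_notMem hxy,
        indicator_of_notMem (fun hy => h (mem_ball.1 hy))]
  have hMint : Integrable
      (fun y : E => (ball x R).indicator (fun y => C * (‖x - y‖ ^ m)⁻¹) y) μ :=
    (integrable_indicator_iff measurableSet_ball).2 (hIball.const_mul C)
  have hmeas : AEStronglyMeasurable (fun y => g y * (‖x - y‖ ^ m)⁻¹) μ :=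
    (hg.measurable.mul
      ((continuous_const.sub continuous_id).norm.pow m).measurable.inv).aestronglyMeasurable
  refine hMint.mono' hmeas (ae_of_all _ fun y => ?_)
  by_cases h : y ∈ ball x R
  · rw [indicator_of_mem h, Real.norm_eq_abs, abs_mul,
      abs_of_nonneg (inv_nonneg.2 (pow_nonneg (norm_nonneg _) _))]
    exact mul_le_mul_of_nonneg_right (hC y) (inv_nonneg.2 (pow_nonneg (norm_nonneg _) _))
  · have hy : g y = 0 := by
      apply image_eq_zero_of_notMem_tsupport
      intro hy
      have h1 : ‖y‖ ≤ R₀ := by simpa [mem_closedBall, dist_zero_right] using hR₀ hy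
      apply h
      rw [mem_ball, dist_comm, dist_eq_norm]
      calc ‖x - y‖ ≤ ‖x‖ + ‖y‖ := norm_sub_le _ _
        _ ≤ ‖x‖ + R₀ := by linarith
        _ < R := by rw [hR]; linarith
    rw [indicator_of_notMem h, hy, zero_mul, norm_zero]

end Stmt9

open Stmt9 in
/-- representation of a compactly supported `C¹` function via its gradient,
and the resulting Riesz-potential bound. -/
theorem stmt_9 (n : ℕ) (hn : 2 ≤ n)
    (u : EuclideanSpace ℝ (Fin n) → ℝ) (hu : ContDiff ℝ 1 u) (hc : HasCompactSupport u)
    (ω : ℝ) (hω : ω = (MeasureTheory.volume (Metric.ball (0 : EuclideanSpace ℝ (Fin n)) 1)).toReal)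
    (x : EuclideanSpace ℝ (Fin n)) :
    u x = (1 / (n * ω)) * ∑ i : Fin n,
        ∫ y, (x i - y i) * fderiv ℝ u y (EuclideanSpace.single i 1) / ‖x - y‖ ^ n
    ∧ |u x| ≤ (1 / (n * ω)) * ∫ y, ‖fderiv ℝ u y‖ / ‖x - y‖ ^ ((n:ℝ) - 1) := by
  classical
  haveI : Nonempty (Fin n) := ⟨⟨0, by omega⟩⟩
  haveI hnontriv : Nontrivial (EuclideanSpace ℝ (Fin n)) := inferInstance
  have hdim : finrank ℝ (EuclideanSpace ℝ (Fin n)) = n := by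
    simp [finrank_euclideanSpace]
  set D : EuclideanSpace ℝ (Fin n) → (EuclideanSpace ℝ (Fin n) →L[ℝ] ℝ) := fderiv ℝ u with hD
  have hDc : Continuous D := by
    rw [hD]
    exact hu.continuous_fderiv one_ne_zero
  have hDsupp : HasCompactSupport D := by
    rw [hD]
    exact hc.fderiv (𝕜 := ℝ)
  have hudiff : Differentiable ℝ u := hu.differentiable one_ne_zero
  obtain ⟨R₁, hR₁⟩ := hc.isBounded.subset_closedBall (0 : EuclideanSpace ℝ (Fin n))
  obtain ⟨R₂, hR₂⟩ := hDsupp.isBounded.subset_closedBall (0 : EuclideanSpace ℝ (Fin n))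
  set R : ℝ := max R₁ R₂ with hRdef
  have hRu : tsupport u ⊆ closedBall 0 R :=
    hR₁.trans (closedBall_subset_closedBall (le_max_left _ _))
  have hRD : tsupport D ⊆ closedBall 0 R :=
    hR₂.trans (closedBall_subset_closedBall (le_max_right _ _))
  set h : EuclideanSpace ℝ (Fin n) → ℝ := fun y => D y (x - y) / ‖x - y‖ ^ n with hhdef
  set B : EuclideanSpace ℝ (Fin n) → ℝ := fun y => ‖D y‖ * (‖x - y‖ ^ (n - 1))⁻¹ with hBdef
  have hBnonneg : ∀ y, 0 ≤ B y := fun y =>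
    mul_nonneg (norm_nonneg _) (inv_nonneg.2 (pow_nonneg (norm_nonneg _) _))
  have hbound : ∀ (y : EuclideanSpace ℝ (Fin n)) (t : ℝ), |t| ≤ ‖x - y‖ * ‖D y‖ →
      |t / ‖x - y‖ ^ n| ≤ B y := by
    intro y t ht
    have hc0 : (0:ℝ) ≤ ‖x - y‖ := norm_nonneg _
    rcases eq_or_lt_of_le hc0 with hc | hc
    · have ht0 : t = 0 := by
        have h1 : |t| ≤ 0 := by rw [← hc] at ht; simpa using ht
        exact abs_eq_zero.1 (le_antisymm h1 (abs_nonneg t))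
      simp [ht0, hBnonneg y]
    · have hcn : ‖x - y‖ ^ n = ‖x - y‖ ^ (n - 1) * ‖x - y‖ := by
        rw [← pow_succ, Nat.sub_add_cancel (by omega)]
      rw [abs_div, abs_of_nonneg (pow_nonneg hc0 n)]
      calc |t| / ‖x - y‖ ^ n ≤ ‖x - y‖ * ‖D y‖ / ‖x - y‖ ^ n := by
            gcongr
        _ = B y := by
          rw [hBdef, hcn]
          field_simp
  have habs_aux : ∀ y : EuclideanSpace ℝ (Fin n),
      |D y (x - y)| ≤ ‖x - y‖ * ‖D y‖ := fun y => by
    calc |D y (x - y)| ≤ ‖D y‖ * ‖x - y‖ := (D y).le_opNorm (x - y)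
      _ = ‖x - y‖ * ‖D y‖ := mul_comm _ _
  have hcoord : ∀ (v : EuclideanSpace ℝ (Fin n)) (i : Fin n), |v i| ≤ ‖v‖ := by
    intro v i
    have h1 : (inner ℝ (EuclideanSpace.single i (1:ℝ)) v : ℝ) = v i := by
      rw [EuclideanSpace.inner_single_left]
      simp
    calc |v i| = |(inner ℝ (EuclideanSpace.single i (1:ℝ)) v : ℝ)| := by rw [h1]
      _ ≤ ‖EuclideanSpace.single i (1:ℝ)‖ * ‖v‖ := abs_real_inner_le_norm _ _
      _ = ‖v‖ := by rw [EuclideanSpace.norm_single]; simp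
  have hBint : Integrable B := by
    have h1 := integrable_mul_inv_norm_pow (volume : Measure (EuclideanSpace ℝ (Fin n)))
      (fun y => ‖D y‖) hDc.norm hDsupp.norm x
    rw [hdim] at h1
    exact h1
  have hnum_cont : Continuous fun y : EuclideanSpace ℝ (Fin n) => D y (x - y) :=
    hDc.clm_apply (continuous_const.sub continuous_id)
  have hden_meas : Measurable fun y : EuclideanSpace ℝ (Fin n) => ‖x - y‖ ^ n :=
    ((continuous_const.sub continuous_id).norm.pow n).measurable
  have hInt_h : Integrable h := by
    refine hBint.mono' ((hnum_cont.measurable.div hden_meas).aestronglyMeasurable)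
      (ae_of_all _ fun y => ?_)
    rw [Real.norm_eq_abs]
    exact hbound y _ (habs_aux y)
  have habs_h : ∀ y, |h y| ≤ B y := fun y => hbound y _ (habs_aux y)
  have hInt_i : ∀ i : Fin n, Integrable fun y : EuclideanSpace ℝ (Fin n) =>
      (x i - y i) * D y (EuclideanSpace.single i 1) / ‖x - y‖ ^ n := by
    intro i
    have hnum : Continuous fun y : EuclideanSpace ℝ (Fin n) =>
        (x i - y i) * D y (EuclideanSpace.single i 1) :=
      (continuous_const.sub (PiLp.continuous_apply (p := 2) (β := fun _ : Fin n => ℝ) i)).mul (hDc.clm_apply continuous_const)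
    refine hBint.mono' ((hnum.measurable.div hden_meas).aestronglyMeasurable)
      (ae_of_all _ fun y => ?_)
    rw [Real.norm_eq_abs]
    refine hbound y _ ?_
    rw [abs_mul]
    have h1 : |x i - y i| ≤ ‖x - y‖ := by
      have := hcoord (x - y) i
      simpa using this
    have h2 : |D y (EuclideanSpace.single i 1)| ≤ ‖D y‖ := by
      calc |D y (EuclideanSpace.single i 1)| ≤ ‖D y‖ * ‖EuclideanSpace.single i (1:ℝ)‖ :=
            (D y).le_opNorm _
        _ = ‖D y‖ := by rw [EuclideanSpace.norm_single]; simp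
    exact mul_le_mul h1 h2 (abs_nonneg _) (norm_nonneg _)
  -- decomposition of h into coordinates
  have hdecomp : ∀ y : EuclideanSpace ℝ (Fin n),
      h y = ∑ i : Fin n, (x i - y i) * D y (EuclideanSpace.single i 1) / ‖x - y‖ ^ n := by
    intro y
    have hbasis : ∑ i : Fin n, (x - y) i • EuclideanSpace.single i (1:ℝ) = x - y := by
      ext j
      rw [WithLp.ofLp_sum, Finset.sum_apply]
      simp [EuclideanSpace.single_apply, mul_ite, Finset.sum_ite_eq]
    have h1 : D y (x - y) = ∑ i : Fin n, (x i - y i) * D y (EuclideanSpace.single i 1) := by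
      conv_lhs => rw [← hbasis]
      rw [map_sum]
      refine Finset.sum_congr rfl fun i _ => ?_
      rw [ContinuousLinearMap.map_smul, smul_eq_mul]
      rfl
    rw [hhdef]
    simp only []
    rw [h1, Finset.sum_div]
  -- positivity of n * ω
  have hω_pos : 0 < ω := by
    rw [hω]
    exact ENNReal.toReal_pos (measure_ball_pos volume 0 one_pos).ne' measure_ball_lt_top.ne
  have hnω : (0:ℝ) < n * ω := by
    have : (0:ℝ) < n := by exact_mod_cast (by omega : 0 < n)
    positivity
  -- the key representation
  have key : ∫ y, h y = (n * ω) * u x := by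
    have htrans : ∫ y, h y = ∫ z, h (x + z) := (integral_add_left_eq_self h x).symm
    have hgint : Integrable (fun z => h (x + z)) := hInt_h.comp_add_left x
    have hpolar := integral_transfer (volume : Measure (EuclideanSpace ℝ (Fin n)))
      (fun z => h (x + z))
    rw [hdim] at hpolar
    have hprodint : Integrable
        (fun p : sphere (0 : EuclideanSpace ℝ (Fin n)) 1 × Ioi (0:ℝ) =>
          h (x + (p.2 : ℝ) • (p.1 : EuclideanSpace ℝ (Fin n))))
        ((volume : Measure (EuclideanSpace ℝ (Fin n))).toSphere.prod
          (.volumeIoiPow (n - 1))) := by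
      have h2 := (integrable_transfer (volume : Measure (EuclideanSpace ℝ (Fin n)))
        (fun z => h (x + z))).1 hgint
      rw [hdim] at h2
      exact h2
    have hfub := integral_prod _ hprodint
    have hinner : ∀ w : sphere (0 : EuclideanSpace ℝ (Fin n)) 1,
        (∫ r : Ioi (0:ℝ), h (x + (r : ℝ) • (w : EuclideanSpace ℝ (Fin n)))
          ∂(Measure.volumeIoiPow (n - 1))) = u x := by
      intro w
      have hw : ‖(w : EuclideanSpace ℝ (Fin n))‖ = 1 := mem_sphere_zero_iff_norm.1 w.2
      set wE : EuclideanSpace ℝ (Fin n) := (w : EuclideanSpace ℝ (Fin n)) with hwE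
      set ψ : ℝ → ℝ := fun r => D (x + r • wE) wE with hψ
      have hlinec : Continuous fun r : ℝ => x + r • wE :=
        continuous_const.add (continuous_id.smul continuous_const)
      have hψcont : Continuous ψ := (hDc.comp hlinec).clm_apply continuous_const
      have hψsupp : HasCompactSupport ψ := by
        apply HasCompactSupport.intro (isCompact_Icc (a := -(R + ‖x‖)) (b := R + ‖x‖))
        intro r hr
        have hmem : x + r • wE ∉ tsupport D := by
          intro hmem
          have h1 : ‖x + r • wE‖ ≤ R := by
            simpa [dist_zero_right] using hRD hmem
          have h2 : ‖r • wE‖ ≤ ‖x + r • wE‖ + ‖x‖ := by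
            calc ‖r • wE‖ = ‖x + r • wE - x‖ := by rw [add_sub_cancel_left]
              _ ≤ ‖x + r • wE‖ + ‖x‖ := norm_sub_le _ _
          rw [norm_smul, hw, mul_one, Real.norm_eq_abs] at h2
          have h3 : |r| ≤ R + ‖x‖ := by linarith
          exact hr ⟨(abs_le.1 h3).1, (abs_le.1 h3).2⟩
        rw [hψ]
        simp [image_eq_zero_of_notMem_tsupport hmem]
      have hψint : IntegrableOn ψ (Ioi (0:ℝ)) volume :=
        (hψcont.integrable_of_hasCompactSupport hψsupp).integrableOn
      have hφderiv : ∀ r : ℝ, HasDerivAt (fun t => u (x + t • wE)) (ψ r) r := by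
        intro r
        have hline : HasDerivAt (fun t : ℝ => x + t • wE) wE r := by
          simpa using ((hasDerivAt_id r).smul_const wE).const_add x
        exact (hudiff (x + r • wE)).hasFDerivAt.comp_hasDerivAt r hline
      have hφtend : Tendsto (fun r : ℝ => u (x + r • wE)) atTop (𝓝 0) := by
        have hev : ∀ᶠ r : ℝ in atTop, u (x + r • wE) = 0 := by
          filter_upwards [eventually_ge_atTop (R + ‖x‖ + 1)] with r hr
          apply image_eq_zero_of_notMem_tsupport
          intro hmem
          have h1 : ‖x + r • wE‖ ≤ R := by
            simpa [dist_zero_right] using hRu hmem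
          have h2 : ‖r • wE‖ ≤ ‖x + r • wE‖ + ‖x‖ := by
            calc ‖r • wE‖ = ‖x + r • wE - x‖ := by rw [add_sub_cancel_left]
              _ ≤ ‖x + r • wE‖ + ‖x‖ := norm_sub_le _ _
          rw [norm_smul, hw, mul_one, Real.norm_eq_abs] at h2
          have h3 := le_abs_self r
          linarith
        exact Tendsto.congr' (by filter_upwards [hev] with r hr; exact hr.symm)
          tendsto_const_nhds
      have hFTC : ∫ r in Ioi (0:ℝ), ψ r = 0 - u (x + (0:ℝ) • wE) :=
        integral_Ioi_of_hasDerivAt_of_tendsto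
          ((hu.continuous.comp hlinec).continuousWithinAt) (fun r _ => hφderiv r)
          hψint hφtend
      have hFTC' : ∫ r in Ioi (0:ℝ), ψ r = -u x := by
        rw [hFTC]
        simp
      rw [integral_volumeIoiPow (n - 1) (fun r => h (x + r • wE))]
      have hcongr : ∀ r ∈ Ioi (0:ℝ), r ^ (n-1) • h (x + r • wE) = -(ψ r) := by
        intro r hr
        rw [mem_Ioi] at hr
        have hxsub : x - (x + r • wE) = -(r • wE) := by abel
        have hnrm : ‖x - (x + r • wE)‖ = r := by
          rw [hxsub, norm_neg, norm_smul, hw, mul_one, Real.norm_eq_abs, abs_of_pos hr]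
        have happ : D (x + r • wE) (x - (x + r • wE)) = -(r * ψ r) := by
          rw [hxsub, ContinuousLinearMap.map_neg, ContinuousLinearMap.map_smul]
          rw [hψ]
          simp [smul_eq_mul]
        have hrn : r ^ n = r ^ (n-1) * r := by
          rw [← pow_succ, Nat.sub_add_cancel (by omega)]
        rw [hhdef]
        simp only []
        rw [happ, hnrm, smul_eq_mul, hrn]
        have hr0 : r ≠ 0 := hr.ne'
        have hrn0 : r ^ (n-1) ≠ 0 := pow_ne_zero _ hr0
        field_simp
      rw [setIntegral_congr_fun measurableSet_Ioi hcongr, integral_neg, hFTC', neg_neg]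
    have houter : (∫ p : sphere (0 : EuclideanSpace ℝ (Fin n)) 1 × Ioi (0:ℝ),
        h (x + (p.2 : ℝ) • (p.1 : EuclideanSpace ℝ (Fin n)))
        ∂((volume : Measure (EuclideanSpace ℝ (Fin n))).toSphere.prod
          (.volumeIoiPow (n - 1)))) = (n * ω) * u x := by
      rw [hfub]
      have hcongr2 : (∫ w : sphere (0 : EuclideanSpace ℝ (Fin n)) 1,
          (∫ r : Ioi (0:ℝ), h (x + (r : ℝ) • (w : EuclideanSpace ℝ (Fin n)))
            ∂(Measure.volumeIoiPow (n - 1)))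
          ∂(volume : Measure (EuclideanSpace ℝ (Fin n))).toSphere)
          = ∫ _w : sphere (0 : EuclideanSpace ℝ (Fin n)) 1, u x
            ∂(volume : Measure (EuclideanSpace ℝ (Fin n))).toSphere :=
        integral_congr_ae (ae_of_all _ fun w => hinner w)
      rw [hcongr2, integral_const]
      rw [measureReal_def, Measure.toSphere_apply_univ, hdim, ENNReal.toReal_mul, ENNReal.toReal_natCast,
        ← hω, smul_eq_mul]
    rw [htrans, hpolar, houter]
  -- conclusion
  have hcast : ((n:ℝ) - 1) = ((n - 1 : ℕ) : ℝ) := by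
    push_cast [Nat.cast_sub (by omega : 1 ≤ n)]
    ring
  have hBeq : ∀ y : EuclideanSpace ℝ (Fin n),
      ‖D y‖ / ‖x - y‖ ^ ((n:ℝ) - 1) = B y := by
    intro y
    rw [hcast, Real.rpow_natCast, div_eq_mul_inv, hBdef]
  have hux : u x = (1 / (n * ω)) * ∫ y, h y := by
    rw [key]
    field_simp
  constructor
  · rw [hux]
    congr 1
    rw [← integral_finset_sum _ (fun i _ => hInt_i i)]
    exact integral_congr_ae (ae_of_all _ fun y => hdecomp y)
  · rw [hux, abs_mul, abs_of_pos (by positivity : (0:ℝ) < 1 / (n * ω))]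
    refine mul_le_mul_of_nonneg_left ?_ (by positivity)
    calc |∫ y, h y| ≤ ∫ y, |h y| := by
          simpa [Real.norm_eq_abs] using norm_integral_le_integral_norm (μ := volume) h
      _ ≤ ∫ y, B y := integral_mono hInt_h.abs hBint habs_h
      _ = ∫ y, ‖D y‖ / ‖x - y‖ ^ ((n:ℝ) - 1) :=
          integral_congr_ae (ae_of_all _ fun y => (hBeq y).symm)
end
end

section
/- Let Ω ⊂ ℝⁿ be a set of finite measure and 0 < μ ≤ 1. For f ∈ L^p(Ω) define (V_μ f)(x) = ∫_Ω |x−y|^{n(μ−1)} f(y) dy. If 0 ≤ δ := 1/p − 1/q < μ (1 ≤ p ≤ q < ∞), then ‖V_μ f‖_{L^q(Ω)} ≤ ((1−δ)/(μ−δ))^{1−δ} ω_n^{1−μ} |Ω|^{μ−δ} ‖f‖_{L^p(Ω)}. -/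
open MeasureTheory Set Metric
open scoped ENNReal

lemma lintegral_fun_norm_addHaar' {E : Type*} [NormedAddCommGroup E] [NormedSpace ℝ E]
    [MeasurableSpace E] [BorelSpace E] [FiniteDimensional ℝ E] [Nontrivial E]
    (μ : Measure E) [μ.IsAddHaarMeasure] (g : ℝ → ℝ≥0∞) (hg : Measurable g) :
    ∫⁻ x, g ‖x‖ ∂μ
      = (Module.finrank ℝ E) * μ (ball 0 1)
        * ∫⁻ y in Ioi (0:ℝ), ENNReal.ofReal (y ^ (Module.finrank ℝ E - 1)) * g y := by
  have h1 : ∫⁻ x, g ‖x‖ ∂μ = ∫⁻ x : ({0}ᶜ : Set E), g ‖x.1‖ ∂(μ.comap Subtype.val) := by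
    rw [lintegral_subtype_comap (measurableSet_singleton (0:E)).compl fun x => g ‖x‖,
      MeasureTheory.restrict_compl_singleton]
  rw [h1]
  have h2 : ∫⁻ x : ({0}ᶜ : Set E), g ‖x.1‖ ∂(μ.comap Subtype.val)
      = ∫⁻ p : sphere (0:E) 1 × Ioi (0:ℝ), g p.2
          ∂(μ.toSphere.prod (Measure.volumeIoiPow (Module.finrank ℝ E - 1))) := by
    have := ((μ.measurePreserving_homeomorphUnitSphereProd).lintegral_comp_emb
      (Homeomorph.measurableEmbedding _) (fun p => g p.2.1))
    simp only [homeomorphUnitSphereProd_apply_snd_coe] at this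
    exact this
  rw [h2]
  have h3 : ∫⁻ p : sphere (0:E) 1 × Ioi (0:ℝ), g p.2
        ∂(μ.toSphere.prod (Measure.volumeIoiPow (Module.finrank ℝ E - 1)))
      = μ.toSphere univ * ∫⁻ y : Ioi (0:ℝ), g y
          ∂(Measure.volumeIoiPow (Module.finrank ℝ E - 1)) := by
    have := lintegral_prod_mul (μ := μ.toSphere)
      (ν := Measure.volumeIoiPow (Module.finrank ℝ E - 1))
      (f := fun _ => (1:ℝ≥0∞)) (g := fun y : Ioi (0:ℝ) => g y)
      aemeasurable_const ((hg.comp measurable_subtype_coe).aemeasurable)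
    simpa using this
  rw [h3, Measure.toSphere_apply_univ]
  have h4 : ∫⁻ y : Ioi (0:ℝ), g y ∂(Measure.volumeIoiPow (Module.finrank ℝ E - 1))
      = ∫⁻ y in Ioi (0:ℝ), ENNReal.ofReal (y ^ (Module.finrank ℝ E - 1)) * g y := by
    rw [Measure.volumeIoiPow]
    rw [lintegral_withDensity_eq_lintegral_mul _
        ((measurable_subtype_coe.pow_const _).ennreal_ofReal)
        (show Measurable fun y : Ioi (0:ℝ) => g y from hg.comp measurable_subtype_coe)]
    rw [← lintegral_subtype_comap measurableSet_Ioi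
      (fun y : ℝ => ENNReal.ofReal (y ^ (Module.finrank ℝ E - 1)) * g y)]
    rfl
  rw [h4, mul_assoc]

lemma lintegral_ball_rpow {E : Type*} [NormedAddCommGroup E] [NormedSpace ℝ E]
    [MeasurableSpace E] [BorelSpace E] [FiniteDimensional ℝ E] [Nontrivial E]
    (μ : Measure E) [μ.IsAddHaarMeasure] {R c : ℝ} (hR : 0 < R)
    (hc : -(Module.finrank ℝ E : ℝ) < c) (hc0 : c ≤ 0) :
    ∫⁻ z in ball (0:E) R, ENNReal.ofReal (‖z‖ ^ c) ∂μ
      = μ (ball 0 1) * ENNReal.ofReal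
          ((Module.finrank ℝ E : ℝ) / (Module.finrank ℝ E + c) * R ^ ((Module.finrank ℝ E : ℝ) + c)) := by
  set d := Module.finrank ℝ E with hd
  have hd0 : 0 < d := Module.finrank_pos
  have hd0' : (0:ℝ) < d := by exact_mod_cast hd0
  set g : ℝ → ℝ≥0∞ := fun t => if t < R then ENNReal.ofReal (t ^ c) else 0 with hgdef
  have hgm : Measurable g := by
    apply Measurable.ite (measurableSet_Iio)
    · fun_prop
    · exact measurable_const
  have key : ∫⁻ z in ball (0:E) R, ENNReal.ofReal (‖z‖ ^ c) ∂μ = ∫⁻ x, g ‖x‖ ∂μ := by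
    rw [← lintegral_indicator measurableSet_ball]
    congr 1 with z
    by_cases hz : z ∈ ball (0:E) R
    · rw [indicator_of_mem hz]
      simp [hgdef, mem_ball_zero_iff.mp hz]
    · rw [indicator_of_notMem hz]
      have : ¬ ‖z‖ < R := by simpa [mem_ball_zero_iff] using hz
      simp [hgdef, this]
  rw [key, lintegral_fun_norm_addHaar' μ g hgm, ← hd]
  set e : ℝ := (d:ℝ) - 1 + c with he
  have he1 : (-1:ℝ) < e := by
    rw [he]; linarith
  have h1d : ∫⁻ y in Ioi (0:ℝ), ENNReal.ofReal (y ^ (d - 1)) * g y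
      = ∫⁻ y in Ioo (0:ℝ) R, ENNReal.ofReal (y ^ e) := by
    have step1 : ∫⁻ y in Ioi (0:ℝ), ENNReal.ofReal (y ^ (d - 1)) * g y
        = ∫⁻ y in Ioi (0:ℝ), (Ioo (0:ℝ) R).indicator (fun y => ENNReal.ofReal (y ^ e)) y := by
      apply setLIntegral_congr_fun measurableSet_Ioi
      intro y hy
      by_cases h : y < R
      · rw [indicator_of_mem (by exact ⟨hy, h⟩ : y ∈ Ioo 0 R)]
        have hy0 : (0:ℝ) < y := hy
        simp only [hgdef, if_pos h]
        rw [← ENNReal.ofReal_mul (by positivity)]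
        congr 1
        rw [← Real.rpow_natCast y (d-1), ← Real.rpow_add hy0]
        congr 1
        have : ((d - 1 : ℕ) : ℝ) = (d:ℝ) - 1 := by
          have := Nat.cast_sub (by omega : 1 ≤ d) (R := ℝ)
          simpa using this
        rw [this, he]
      · rw [indicator_of_notMem (by simp [h] : y ∉ Ioo 0 R)]
        simp [hgdef, h]
    rw [step1, lintegral_indicator measurableSet_Ioo,
      Measure.restrict_restrict measurableSet_Ioo,
      inter_eq_self_of_subset_left Ioo_subset_Ioi_self]
  have h2d : ∫⁻ y in Ioo (0:ℝ) R, ENNReal.ofReal (y ^ e)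
      = ENNReal.ofReal (R ^ (e+1) / (e+1)) := by
    rw [Measure.restrict_congr_set Ioo_ae_eq_Ioc]
    have hint : IntegrableOn (fun y : ℝ => y ^ e) (Ioc 0 R) := by
      rw [← intervalIntegrable_iff_integrableOn_Ioc_of_le hR.le]
      exact intervalIntegral.intervalIntegrable_rpow' he1
    rw [← ofReal_integral_eq_lintegral_ofReal hint ?nonneg]
    case nonneg =>
      filter_upwards [ae_restrict_mem measurableSet_Ioc] with y hy
      exact Real.rpow_nonneg hy.1.le _
    congr 1
    rw [← intervalIntegral.integral_of_le hR.le, integral_rpow (Or.inl he1)]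
    rw [Real.zero_rpow (by linarith)]
    ring
  rw [h1d, h2d]
  have hde : e + 1 = (d:ℝ) + c := by rw [he]; ring
  have hre : (d:ℝ) / ((d:ℝ)+c) * R ^ ((d:ℝ)+c) = (d:ℝ) * (R ^ (e+1) / (e+1)) := by
    rw [hde]; ring
  rw [hre, ENNReal.ofReal_mul (by positivity)]
  have hcast : ((d:ℝ≥0∞)) = ENNReal.ofReal (d:ℝ) := by simp
  rw [hcast]
  ring

lemma kernel_bound {E : Type*} [NormedAddCommGroup E] [NormedSpace ℝ E]
    [MeasurableSpace E] [BorelSpace E] [FiniteDimensional ℝ E] [Nontrivial E]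
    (μ : Measure E) [μ.IsAddHaarMeasure] {Ω : Set E} (hΩm : MeasurableSet Ω)
    (hΩfin : μ Ω ≠ ⊤) {R c : ℝ} (hR : 0 < R) (hc0 : c ≤ 0)
    (hvol : μ Ω = μ (ball (0:E) R)) (x : E) :
    ∫⁻ y in Ω, ENNReal.ofReal (‖x - y‖ ^ c) ∂μ
      ≤ ∫⁻ z in ball (0:E) R, ENNReal.ofReal (‖z‖ ^ c) ∂μ := by
  set B := ball x R with hB
  have hBm : MeasurableSet B := measurableSet_ball
  set h : E → ℝ≥0∞ := fun y => ENNReal.ofReal (‖x - y‖ ^ c) with hh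
  have hdisj : Disjoint (Ω ∩ B) (Ω \ B) := by
    rw [Set.disjoint_left]; rintro y ⟨-, hyB⟩ ⟨-, hyB'⟩; exact hyB' hyB
  have hdisj2 : Disjoint (Ω ∩ B) (B \ Ω) := by
    rw [Set.disjoint_left]; rintro y ⟨hyΩ, -⟩ ⟨-, hyΩ'⟩; exact hyΩ' hyΩ
  have hsplit : ∫⁻ y in Ω, h y ∂μ = (∫⁻ y in Ω ∩ B, h y ∂μ) + ∫⁻ y in Ω \ B, h y ∂μ := by
    rw [← lintegral_union (hΩm.diff hBm) hdisj, inter_union_diff]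
  have h1 : ∫⁻ y in Ω \ B, h y ∂μ ≤ ENNReal.ofReal (R ^ c) * μ (Ω \ B) := by
    rw [← setLIntegral_const]
    apply setLIntegral_mono measurable_const
    intro y hy
    apply ENNReal.ofReal_le_ofReal
    have hyx : R ≤ ‖x - y‖ := by
      have := hy.2
      rw [hB, mem_ball, not_lt] at this
      rwa [← dist_eq_norm, dist_comm]
    exact Real.rpow_le_rpow_of_nonpos hR hyx hc0
  have hμB : μ B = μ Ω := by rw [hB, Measure.addHaar_ball_center, hvol]
  have hfinB : μ (Ω ∩ B) ≠ ⊤ := (ne_top_of_le_ne_top hΩfin (measure_mono inter_subset_left))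
  have hmeq : μ (Ω \ B) = μ (B \ Ω) := by
    have e1 : μ (Ω ∩ B) + μ (Ω \ B) = μ Ω := measure_inter_add_diff Ω hBm
    have e2 : μ (B ∩ Ω) + μ (B \ Ω) = μ B := measure_inter_add_diff B hΩm
    rw [inter_comm, hμB] at e2
    have := e1.trans e2.symm
    exact (ENNReal.add_right_inj hfinB).mp this
  have h2 : ENNReal.ofReal (R ^ c) * μ (B \ Ω) ≤ ∫⁻ y in B \ Ω, h y ∂μ := by
    rw [← setLIntegral_const]
    apply lintegral_mono_ae
    have hxne : ∀ᵐ y ∂(μ.restrict (B \ Ω)), y ≠ x := by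
      apply ae_restrict_of_ae
      rw [ae_iff]
      simpa using measure_singleton (μ := μ) x
    filter_upwards [ae_restrict_mem (hBm.diff hΩm), hxne] with y hy hyx
    apply ENNReal.ofReal_le_ofReal
    have h0 : 0 < ‖x - y‖ := by
      rw [norm_pos_iff, sub_ne_zero]; exact fun hc => hyx hc.symm
    have hle : ‖x - y‖ ≤ R := by
      have hyB := hy.1
      rw [hB, mem_ball] at hyB
      rw [← dist_eq_norm, dist_comm]
      exact le_of_lt hyB
    exact Real.rpow_le_rpow_of_nonpos h0 hle hc0
  have htrans : ∫⁻ y in B, h y ∂μ = ∫⁻ z in ball (0:E) R, ENNReal.ofReal (‖z‖ ^ c) ∂μ := by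
    have hmp : MeasurePreserving (fun t : E => x - t) μ μ := Measure.measurePreserving_sub_left μ x
    have hemb : MeasurableEmbedding (fun t : E => x - t) :=
      (MeasurableEquiv.subLeft x).measurableEmbedding
    have := hmp.setLIntegral_comp_emb hemb (fun z => ENNReal.ofReal (‖z‖ ^ c)) B
    rw [this]
    have himg : (fun t : E => x - t) '' B = ball (0:E) R := by
      ext z
      constructor
      · rintro ⟨y, hy, rfl⟩
        rw [mem_ball_zero_iff]
        rw [hB, mem_ball, dist_eq_norm] at hy
        rwa [norm_sub_rev] at hy
      · intro hz
        refine ⟨x - z, ?_, by simp⟩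
        rw [mem_ball_zero_iff] at hz
        rw [hB, mem_ball, dist_eq_norm]
        simpa using hz
    rw [himg]
  calc ∫⁻ y in Ω, h y ∂μ
      = (∫⁻ y in Ω ∩ B, h y ∂μ) + ∫⁻ y in Ω \ B, h y ∂μ := hsplit
    _ ≤ (∫⁻ y in Ω ∩ B, h y ∂μ) + ENNReal.ofReal (R ^ c) * μ (Ω \ B) := by gcongr
    _ = (∫⁻ y in Ω ∩ B, h y ∂μ) + ENNReal.ofReal (R ^ c) * μ (B \ Ω) := by rw [hmeq]
    _ ≤ (∫⁻ y in Ω ∩ B, h y ∂μ) + ∫⁻ y in B \ Ω, h y ∂μ := by gcongr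
    _ = ∫⁻ y in (Ω ∩ B) ∪ (B \ Ω), h y ∂μ := (lintegral_union (hBm.diff hΩm) hdisj2).symm
    _ ≤ ∫⁻ y in B, h y ∂μ := lintegral_mono_set (by
        rintro y (⟨-, hyB⟩ | ⟨hyB, -⟩) <;> exact hyB)
    _ = _ := htrans

lemma const_algebra {w V t s x : ℝ} (hw : 0 < w) (hV : 0 < V) (ht : 0 < t)
    (hs : 0 < s) (hx : x = t - s) :
    (w * (t/s * (V/w) ^ (s/t))) ^ t = (t/s) ^ t * w ^ x * V ^ s := by
  rw [Real.mul_rpow hw.le (by positivity), Real.mul_rpow (by positivity) (by positivity),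
    ← Real.rpow_mul (by positivity), div_mul_cancel₀ _ ht.ne',
    Real.div_rpow hV.le hw.le, hx, Real.rpow_sub hw]
  have h1 : (0:ℝ) < w ^ s := Real.rpow_pos_of_pos hw s
  field_simp

lemma riesz_main (n : ℕ) (hn : 0 < n) (Ω : Set (EuclideanSpace ℝ (Fin n)))
    (hΩm : MeasurableSet Ω) (hΩfin : volume Ω < ⊤)
    (μ : ℝ) (hμ0 : 0 < μ) (hμ1 : μ ≤ 1)
    (p q : ℝ) (hp : 1 ≤ p) (hpq : p ≤ q)
    (δ : ℝ) (hδ : δ = 1/p - 1/q) (hδ0 : 0 ≤ δ) (hδμ : δ < μ)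
    (f : EuclideanSpace ℝ (Fin n) → ℝ) (hfm : Measurable f)
    (hI : (∫⁻ y in Ω, (ENNReal.ofReal |f y|) ^ p) ≠ ⊤) :
    (∫ x in Ω, |∫ y in Ω, ‖x - y‖ ^ ((n:ℝ) * (μ - 1)) * f y| ^ q) ^ (1/q)
      ≤ ((1 - δ) / (μ - δ)) ^ (1 - δ)
        * ((volume (Metric.ball (0 : EuclideanSpace ℝ (Fin n)) 1)).toReal) ^ (1 - μ)
        * (volume Ω).toReal ^ (μ - δ)
        * (∫ x in Ω, |f x| ^ p) ^ (1/p) := by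
  have hp0 : (0:ℝ) < p := lt_of_lt_of_le one_pos hp
  have hq1 : (1:ℝ) ≤ q := hp.trans hpq
  have hq0 : (0:ℝ) < q := lt_of_lt_of_le one_pos hq1
  have h1p : 1/p ≤ 1 := by rw [div_le_one hp0]; exact hp
  have h1q : 0 < 1/q := by positivity
  have hδ1 : δ < 1 := by rw [hδ]; linarith
  have hfr : Module.finrank ℝ (EuclideanSpace ℝ (Fin n)) = n := finrank_euclideanSpace_fin
  haveI : Nontrivial (EuclideanSpace ℝ (Fin n)) :=
    Module.nontrivial_of_finrank_pos (by omega :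
      0 < Module.finrank ℝ (EuclideanSpace ℝ (Fin n)))
  have hts : (0:ℝ) < 1 - δ := by linarith
  have hss : (0:ℝ) < μ - δ := by linarith
  -- trivial case
  by_cases hΩ0 : volume Ω = 0
  · rw [Measure.restrict_eq_zero.mpr hΩ0]
    simp only [integral_zero_measure]
    rw [Real.zero_rpow (by positivity)]
    have h2 : (0:ℝ) ≤ ∫ x in Ω, |f x| ^ p :=
      integral_nonneg fun x => Real.rpow_nonneg (abs_nonneg _) _
    positivity
  -- main case
  set t : ℝ := 1 - δ with htdef
  set s : ℝ := μ - δ with hsdef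
  set r : ℝ := t⁻¹ with hrdef
  have hr0 : 0 < r := by positivity
  have hrinv : 1/r = t := by rw [hrdef, one_div, inv_inv]
  set a : ℝ := (n:ℝ) * (μ - 1) with hadef
  have ha0 : a ≤ 0 := mul_nonpos_of_nonneg_of_nonpos (by positivity) (by linarith)
  set c : ℝ := a * r with hcdef
  have hc0 : c ≤ 0 := mul_nonpos_of_nonpos_of_nonneg ha0 hr0.le
  have hn0 : ((n:ℝ)) ≠ 0 := by positivity
  have hnc : (n:ℝ) + c = (n:ℝ) * s / t := by
    rw [hcdef, hadef, hrdef, hsdef, htdef]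
    have ht' : (1:ℝ) - δ ≠ 0 := by linarith
    field_simp
    ring
  have hnc0 : (0:ℝ) < (n:ℝ) + c := by
    rw [hnc]; positivity
  have hcn : -(n:ℝ) < c := by linarith
  set ω : ℝ≥0∞ := volume (Metric.ball (0 : EuclideanSpace ℝ (Fin n)) 1) with hωdef
  have hω0 : ω ≠ 0 := (measure_ball_pos _ _ one_pos).ne'
  have hωt : ω ≠ ⊤ := measure_ball_lt_top.ne
  set ωr : ℝ := ω.toReal with hωrdef
  have hωr : 0 < ωr := ENNReal.toReal_pos hω0 hωt
  set V : ℝ := (volume Ω).toReal with hVdef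
  have hV0 : 0 < V := ENNReal.toReal_pos hΩ0 hΩfin.ne
  set R : ℝ := (V/ωr) ^ ((n:ℝ)⁻¹) with hRdef
  have hR0 : 0 < R := Real.rpow_pos_of_pos (by positivity) _
  have hvol : volume Ω = volume (ball (0 : EuclideanSpace ℝ (Fin n)) R) := by
    rw [Measure.addHaar_ball volume 0 hR0.le, hfr]
    have hRn : R ^ (n : ℕ) = V / ωr := by
      rw [← Real.rpow_natCast R n, hRdef, ← Real.rpow_mul (by positivity),
        inv_mul_cancel₀ hn0, Real.rpow_one]
    rw [hRn, ENNReal.ofReal_div_of_pos hωr, hωrdef, ENNReal.ofReal_toReal hωt,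
      hVdef, ENNReal.ofReal_toReal hΩfin.ne, ENNReal.div_mul_cancel hω0 hωt]
  set F : EuclideanSpace ℝ (Fin n) → ℝ≥0∞ := fun y => ENNReal.ofReal |f y| with hFdef
  have hFm : Measurable F := hfm.abs.ennreal_ofReal
  have hFt : ∀ y, F y ≠ ⊤ := fun y => ENNReal.ofReal_ne_top
  set H : EuclideanSpace ℝ (Fin n) → EuclideanSpace ℝ (Fin n) → ℝ≥0∞ :=
    fun x y => ENNReal.ofReal (‖x - y‖ ^ a) with hHdef
  have hHm : Measurable (fun z : EuclideanSpace ℝ (Fin n) × EuclideanSpace ℝ (Fin n) =>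
      H z.1 z.2) := by
    rw [hHdef]; fun_prop
  set K : ℝ≥0∞ := ω * ENNReal.ofReal ((n:ℝ)/((n:ℝ)+c) * R ^ ((n:ℝ)+c)) with hKdef
  have hKt : K ≠ ⊤ := ENNReal.mul_ne_top hωt ENNReal.ofReal_ne_top
  have hball : ∫⁻ z in ball (0 : EuclideanSpace ℝ (Fin n)) R, ENNReal.ofReal (‖z‖ ^ c) = K := by
    have := lintegral_ball_rpow (E := EuclideanSpace ℝ (Fin n)) volume
      (R := R) (c := c) hR0 (by rw [hfr]; exact hcn) hc0
    rw [hfr] at this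
    exact this
  have hHr : ∀ x y : EuclideanSpace ℝ (Fin n), (H x y) ^ r = ENNReal.ofReal (‖x - y‖ ^ c) := by
    intro x y
    rw [hHdef]
    simp only
    rw [ENNReal.ofReal_rpow_of_nonneg (Real.rpow_nonneg (norm_nonneg _) _) hr0.le,
      ← Real.rpow_mul (norm_nonneg _), ← hcdef]
  have hker : ∀ x : EuclideanSpace ℝ (Fin n), (∫⁻ y in Ω, (H x y) ^ r) ≤ K := by
    intro x
    calc ∫⁻ y in Ω, (H x y) ^ r = ∫⁻ y in Ω, ENNReal.ofReal (‖x - y‖ ^ c) := by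
          apply lintegral_congr; intro y; exact hHr x y
      _ ≤ ∫⁻ z in ball (0 : EuclideanSpace ℝ (Fin n)) R, ENNReal.ofReal (‖z‖ ^ c) :=
          kernel_bound volume hΩm hΩfin.ne hR0 hc0 hvol x
      _ = K := hball
  have hker' : ∀ y : EuclideanSpace ℝ (Fin n), (∫⁻ x in Ω, (H x y) ^ r) ≤ K := by
    intro y
    have hsymm : ∀ x : EuclideanSpace ℝ (Fin n), H x y = H y x := by
      intro x; rw [hHdef]; simp only; rw [norm_sub_rev]
    calc ∫⁻ x in Ω, (H x y) ^ r = ∫⁻ x in Ω, (H y x) ^ r := by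
          apply lintegral_congr; intro x; rw [hsymm x]
      _ ≤ K := hker y
  set I : ℝ≥0∞ := ∫⁻ y in Ω, (F y) ^ p with hIdef
  have hIt : I ≠ ⊤ := hI
  have he2 : (0:ℝ) ≤ 1/r - 1/q := by
    rw [hrinv, htdef, hδ]
    have h3 : 1 - (1/p - 1/q) - 1/q = 1 - 1/p := by ring
    have h4 : (1:ℝ) - (1/p - 1/q) - 1/q ≥ 0 := by rw [h3]; linarith
    linarith
  -- Hölder step
  have hold : ∀ x : EuclideanSpace ℝ (Fin n),
      (∫⁻ y in Ω, H x y * F y)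
        ≤ (∫⁻ y in Ω, (H x y)^r * (F y)^p) ^ (1/q) * (K ^ (1/r - 1/q) * I ^ δ) := by
    intro x
    have hh : Measurable fun y => H x y := by
      rw [hHdef]; fun_prop
    set ε : Fin 3 → ℝ := ![1/q, 1/r - 1/q, δ] with hεdef
    set φ : Fin 3 → EuclideanSpace ℝ (Fin n) → ℝ≥0∞ :=
      ![fun y => (H x y)^r * (F y)^p, fun y => (H x y)^r, fun y => (F y)^p] with hφdef
    have hsum : ∑ i, ε i = 1 := by
      rw [hεdef]
      rw [Fin.sum_univ_three]
      simp only [Matrix.cons_val_zero, Matrix.cons_val_one, Matrix.head_cons,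
        Matrix.cons_val_two, Matrix.tail_cons]
      rw [hrinv, htdef]; ring
    have hnonneg : ∀ i ∈ Finset.univ, 0 ≤ ε i := by
      intro i _
      fin_cases i
      · simpa [hεdef] using h1q.le
      · simpa [hεdef] using he2
      · simpa [hεdef] using hδ0
    have hmeas : ∀ i ∈ Finset.univ, AEMeasurable (φ i) (volume.restrict Ω) := by
      intro i _
      fin_cases i
      · exact ((hh.pow_const r).mul (hFm.pow_const p)).aemeasurable
      · exact (hh.pow_const r).aemeasurable
      · exact (hFm.pow_const p).aemeasurable
    have key := ENNReal.lintegral_prod_norm_pow_le (μ := volume.restrict Ω)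
      Finset.univ hmeas hsum hnonneg
    have hH1 : ∀ y, (H x y ^ r) ^ ((1:ℝ)/q) * (H x y ^ r) ^ (1/r - 1/q) = H x y := by
      intro y
      rw [← ENNReal.rpow_add_of_nonneg _ _ h1q.le he2, ← ENNReal.rpow_mul]
      rw [show (1:ℝ)/q + (1/r - 1/q) = 1/r by ring, one_div,
        mul_inv_cancel₀ hr0.ne', ENNReal.rpow_one]
    have hF1 : ∀ y, (F y ^ p) ^ ((1:ℝ)/q) * (F y ^ p) ^ δ = F y := by
      intro y
      rw [← ENNReal.rpow_add_of_nonneg _ _ h1q.le hδ0, ← ENNReal.rpow_mul]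
      rw [show (1:ℝ)/q + δ = 1/p by rw [hδ]; ring, one_div,
        mul_inv_cancel₀ hp0.ne', ENNReal.rpow_one]
    have hpt : ∀ y, H x y * F y = ∏ i, φ i y ^ ε i := by
      intro y
      rw [Fin.prod_univ_three]
      simp only [hφdef, hεdef, Matrix.cons_val_zero, Matrix.cons_val_one, Matrix.head_cons,
        Matrix.cons_val_two, Matrix.tail_cons]
      rw [ENNReal.mul_rpow_of_nonneg _ _ h1q.le]
      calc H x y * F y
          = ((H x y ^ r) ^ ((1:ℝ)/q) * (H x y ^ r) ^ (1/r - 1/q))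
            * ((F y ^ p) ^ ((1:ℝ)/q) * (F y ^ p) ^ δ) := by rw [hH1, hF1]
        _ = (H x y ^ r) ^ ((1:ℝ)/q) * (F y ^ p) ^ ((1:ℝ)/q)
            * (H x y ^ r) ^ (1/r - 1/q) * (F y ^ p) ^ δ := by ring
    calc ∫⁻ y in Ω, H x y * F y
        = ∫⁻ y in Ω, ∏ i, φ i y ^ ε i := lintegral_congr fun y => hpt y
      _ ≤ ∏ i, (∫⁻ y in Ω, φ i y) ^ ε i := key
      _ = (∫⁻ y in Ω, (H x y)^r * (F y)^p) ^ ((1:ℝ)/q)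
          * ((∫⁻ y in Ω, (H x y)^r) ^ (1/r - 1/q) * (∫⁻ y in Ω, (F y)^p) ^ δ) := by
          rw [Fin.prod_univ_three]
          simp only [hφdef, hεdef, Matrix.cons_val_zero, Matrix.cons_val_one, Matrix.head_cons,
            Matrix.cons_val_two, Matrix.tail_cons]
          rw [mul_assoc]
      _ ≤ (∫⁻ y in Ω, (H x y)^r * (F y)^p) ^ ((1:ℝ)/q) * (K ^ (1/r - 1/q) * I ^ δ) := by
          gcongr
          exact hker x
  set C : ℝ≥0∞ := K ^ (1/r - 1/q) * I ^ δ with hCdef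
  have hCt : C ≠ ⊤ := ENNReal.mul_ne_top (ENNReal.rpow_ne_top_of_nonneg he2 hKt)
    (ENNReal.rpow_ne_top_of_nonneg hδ0 hIt)
  have hCqt : C ^ q ≠ ⊤ := ENNReal.rpow_ne_top_of_nonneg hq0.le hCt
  set A : EuclideanSpace ℝ (Fin n) → ℝ≥0∞ := fun x => ∫⁻ y in Ω, (H x y)^r * (F y)^p with hAdef
  have hstep : ∀ x, (∫⁻ y in Ω, H x y * F y) ^ q ≤ C ^ q * A x := by
    intro x
    calc (∫⁻ y in Ω, H x y * F y) ^ q ≤ ((A x) ^ ((1:ℝ)/q) * C) ^ q :=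
          ENNReal.rpow_le_rpow (hold x) hq0.le
      _ = (A x) ^ ((1/q) * q) * C ^ q := by
          rw [ENNReal.mul_rpow_of_nonneg _ _ hq0.le, ← ENNReal.rpow_mul]
      _ = C ^ q * A x := by
          rw [one_div, inv_mul_cancel₀ hq0.ne', ENNReal.rpow_one, mul_comm]
  have hswap : ∫⁻ x in Ω, A x = ∫⁻ y in Ω, ∫⁻ x in Ω, (H x y)^r * (F y)^p := by
    apply lintegral_lintegral_swap
    exact ((hHm.pow_const r).mul ((hFm.comp measurable_snd).pow_const p)).aemeasurable
  have hton : ∫⁻ x in Ω, A x ≤ K * I := by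
    rw [hswap]
    have step : ∀ y, (∫⁻ x in Ω, (H x y)^r * (F y)^p) = (F y)^p * ∫⁻ x in Ω, (H x y)^r := by
      intro y
      rw [← lintegral_const_mul' _ _ (ENNReal.rpow_ne_top_of_nonneg hp0.le (hFt y))]
      apply lintegral_congr; intro x; rw [mul_comm]
    calc ∫⁻ y in Ω, ∫⁻ x in Ω, (H x y)^r * (F y)^p
        = ∫⁻ y in Ω, (F y)^p * ∫⁻ x in Ω, (H x y)^r := lintegral_congr step
      _ ≤ ∫⁻ y in Ω, (F y)^p * K := by
          apply lintegral_mono; intro y; exact mul_le_mul_right (hker' y) _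
      _ = K * I := by
          have hcomm : ∀ y : EuclideanSpace ℝ (Fin n), (F y)^p * K = K * (F y)^p :=
            fun y => mul_comm _ _
          rw [lintegral_congr hcomm, lintegral_const_mul' K _ hKt, hIdef]
  have hL : (∫⁻ x in Ω, (∫⁻ y in Ω, H x y * F y) ^ q) ≤ C ^ q * (K * I) := by
    calc ∫⁻ x in Ω, (∫⁻ y in Ω, H x y * F y) ^ q
        ≤ ∫⁻ x in Ω, C ^ q * A x := lintegral_mono hstep
      _ = C ^ q * ∫⁻ x in Ω, A x := lintegral_const_mul' _ _ hCqt
      _ ≤ C ^ q * (K * I) := mul_le_mul_right hton _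
  have hfinB : C ^ q * (K * I) ≠ ⊤ := ENNReal.mul_ne_top hCqt (ENNReal.mul_ne_top hKt hIt)
  -- conversion between Bochner and lower integrals
  have hVfm : StronglyMeasurable (fun x => ∫ y in Ω, ‖x - y‖ ^ a * f y) := by
    apply StronglyMeasurable.integral_prod_right'
      (f := fun z : EuclideanSpace ℝ (Fin n) × EuclideanSpace ℝ (Fin n) => ‖z.1 - z.2‖ ^ a * f z.2)
    apply Measurable.stronglyMeasurable
    fun_prop
  have habs : AEStronglyMeasurable (fun x => |∫ y in Ω, ‖x - y‖ ^ a * f y| ^ q)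
      (volume.restrict Ω) := by
    apply Measurable.aestronglyMeasurable
    have hm := hVfm.measurable
    fun_prop
  have heq1 : ∫ x in Ω, |∫ y in Ω, ‖x - y‖ ^ a * f y| ^ q
      = (∫⁻ x in Ω, ENNReal.ofReal (|∫ y in Ω, ‖x - y‖ ^ a * f y| ^ q)).toReal :=
    integral_eq_lintegral_of_nonneg_ae
      (Filter.Eventually.of_forall fun x => Real.rpow_nonneg (abs_nonneg _) _) habs
  have hpoint : ∀ x, ENNReal.ofReal (|∫ y in Ω, ‖x - y‖ ^ a * f y| ^ q)
      ≤ (∫⁻ y in Ω, H x y * F y) ^ q := by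
    intro x
    rw [← ENNReal.ofReal_rpow_of_nonneg (abs_nonneg _) hq0.le]
    apply ENNReal.rpow_le_rpow _ hq0.le
    rw [← Real.enorm_eq_ofReal_abs]
    refine le_trans (enorm_integral_le_lintegral_enorm _) (le_of_eq ?_)
    apply lintegral_congr
    intro y
    rw [enorm_mul,
      Real.enorm_eq_ofReal (Real.rpow_nonneg (norm_nonneg _) _),
      Real.enorm_eq_ofReal_abs]
  have hmain : ∫ x in Ω, |∫ y in Ω, ‖x - y‖ ^ a * f y| ^ q ≤ (C ^ q * (K * I)).toReal := by
    rw [heq1]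
    exact ENNReal.toReal_mono hfinB ((lintegral_mono hpoint).trans hL)
  -- combine exponents
  have hcomb : C ^ q * (K * I) = (K ^ ((1:ℝ)/r) * I ^ ((1:ℝ)/p)) ^ q := by
    have hlhs : C ^ q * (K * I) = K ^ ((1/r - 1/q)*q + 1) * I ^ (δ*q + 1) := by
      rw [hCdef, ENNReal.mul_rpow_of_nonneg _ _ hq0.le, ← ENNReal.rpow_mul, ← ENNReal.rpow_mul,
        ENNReal.rpow_add_of_nonneg _ _ (mul_nonneg he2 hq0.le) zero_le_one,
        ENNReal.rpow_add_of_nonneg _ _ (mul_nonneg hδ0 hq0.le) zero_le_one,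
        ENNReal.rpow_one, ENNReal.rpow_one]
      ring
    have hrhs : (K ^ ((1:ℝ)/r) * I ^ ((1:ℝ)/p)) ^ q = K ^ ((1/r)*q) * I ^ ((1/p)*q) := by
      rw [ENNReal.mul_rpow_of_nonneg _ _ hq0.le, ← ENNReal.rpow_mul, ← ENNReal.rpow_mul]
    have e1 : ((1:ℝ)/r - 1/q) * q + 1 = (1/r)*q := by field_simp; ring
    have e2' : δ*q + 1 = ((1:ℝ)/p)*q := by rw [hδ]; field_simp; ring
    rw [hlhs, hrhs, e1, e2']
  have htoReal : ((K ^ ((1:ℝ)/r) * I ^ ((1:ℝ)/p)) ^ q).toReal ^ ((1:ℝ)/q)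
      = K.toReal ^ ((1:ℝ)/r) * I.toReal ^ ((1:ℝ)/p) := by
    rw [← ENNReal.toReal_rpow, ← Real.rpow_mul ENNReal.toReal_nonneg, mul_one_div,
      div_self hq0.ne', Real.rpow_one, ENNReal.toReal_mul,
      ← ENNReal.toReal_rpow, ← ENNReal.toReal_rpow]
  have hconst : K.toReal ^ ((1:ℝ)/r) = (t/s)^t * ωr^(1-μ) * V^s := by
    have hKr : K.toReal = ωr * ((n:ℝ)/((n:ℝ)+c) * R^((n:ℝ)+c)) := by
      rw [hKdef, ENNReal.toReal_mul, ENNReal.toReal_ofReal (by positivity)]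
    rw [hKr, hrinv]
    have h1 : (n:ℝ)/((n:ℝ)+c) = t/s := by
      rw [hnc]
      field_simp
    have h2 : R ^ ((n:ℝ)+c) = (V/ωr) ^ (s/t) := by
      rw [hnc, hRdef, ← Real.rpow_mul (by positivity)]
      congr 1
      field_simp
    rw [h1, h2]
    exact const_algebra hωr hV0 hts hss (by rw [htdef, hsdef]; ring)
  have hRHS : ∫ x in Ω, |f x| ^ p = I.toReal := by
    rw [integral_eq_lintegral_of_nonneg_ae
      (Filter.Eventually.of_forall fun x => Real.rpow_nonneg (abs_nonneg _) _)
      (by apply Measurable.aestronglyMeasurable; fun_prop)]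
    rw [hIdef]
    congr 1
    apply lintegral_congr
    intro y
    rw [hFdef]
    exact (ENNReal.ofReal_rpow_of_nonneg (abs_nonneg _) hp0.le).symm
  calc (∫ x in Ω, |∫ y in Ω, ‖x - y‖ ^ a * f y| ^ q) ^ ((1:ℝ)/q)
      ≤ ((C ^ q * (K * I)).toReal) ^ ((1:ℝ)/q) :=
        Real.rpow_le_rpow (integral_nonneg fun x => Real.rpow_nonneg (abs_nonneg _) _)
          hmain (by positivity)
    _ = K.toReal ^ ((1:ℝ)/r) * I.toReal ^ ((1:ℝ)/p) := by rw [hcomb]; exact htoReal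
    _ = (t/s)^t * ωr^(1-μ) * V^s * I.toReal ^ ((1:ℝ)/p) := by rw [hconst]
    _ = (t/s)^t * ωr^(1-μ) * V^s * (∫ x in Ω, |f x| ^ p) ^ ((1:ℝ)/p) := by rw [hRHS]

open MeasureTheory in
/-- bound for the Riesz potential `V_μ` with explicit constant
(Gilbarg–Trudinger Lemma 7.12). -/
theorem stmt_10 (n : ℕ) (hn : 0 < n) (Ω : Set (EuclideanSpace ℝ (Fin n)))
    (hΩm : MeasurableSet Ω) (hΩfin : volume Ω < ⊤)
    (μ : ℝ) (hμ0 : 0 < μ) (hμ1 : μ ≤ 1)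
    (p q : ℝ) (hp : 1 ≤ p) (hpq : p ≤ q)
    (δ : ℝ) (hδ : δ = 1/p - 1/q) (hδ0 : 0 ≤ δ) (hδμ : δ < μ)
    (f : EuclideanSpace ℝ (Fin n) → ℝ)
    (hf : MemLp f (ENNReal.ofReal p) (volume.restrict Ω)) :
    (∫ x in Ω, |∫ y in Ω, ‖x - y‖ ^ ((n:ℝ) * (μ - 1)) * f y| ^ q) ^ (1/q)
      ≤ ((1 - δ) / (μ - δ)) ^ (1 - δ)
        * ((volume (Metric.ball (0 : EuclideanSpace ℝ (Fin n)) 1)).toReal) ^ (1 - μ)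
        * (volume Ω).toReal ^ (μ - δ)
        * (∫ x in Ω, |f x| ^ p) ^ (1/p) := by
  have hp0 : (0:ℝ) < p := lt_of_lt_of_le one_pos hp
  obtain ⟨hfa, hfl⟩ := hf
  set g := hfa.mk f with hgdef
  have hgm : Measurable g := hfa.stronglyMeasurable_mk.measurable
  have hfg : f =ᵐ[volume.restrict Ω] g := hfa.ae_eq_mk
  have hI : (∫⁻ y in Ω, (ENNReal.ofReal |g y|) ^ p) ≠ ⊤ := by
    have h2 := hfl
    rw [eLpNorm_congr_ae hfg] at h2
    rw [eLpNorm_eq_lintegral_rpow_enorm_toReal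
      (by simp only [Ne, ENNReal.ofReal_eq_zero, not_le]; exact hp0) ENNReal.ofReal_ne_top] at h2
    rw [ENNReal.toReal_ofReal hp0.le] at h2
    intro htop
    rw [show (∫⁻ y in Ω, (ENNReal.ofReal |g y|) ^ p) = ∫⁻ y in Ω, ‖g y‖ₑ ^ p from
      lintegral_congr fun y => by rw [Real.enorm_eq_ofReal_abs]] at htop
    rw [htop, ENNReal.top_rpow_of_pos (by positivity : (0:ℝ) < 1/p)] at h2
    exact absurd h2 (lt_irrefl _)
  have key := riesz_main n hn Ω hΩm hΩfin μ hμ0 hμ1 p q hp hpq δ hδ hδ0 hδμ g hgm hI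
  have e1 : ∀ x, (∫ y in Ω, ‖x - y‖ ^ ((n:ℝ)*(μ-1)) * f y)
      = ∫ y in Ω, ‖x - y‖ ^ ((n:ℝ)*(μ-1)) * g y := by
    intro x
    apply integral_congr_ae
    filter_upwards [hfg] with y hy
    rw [hy]
  have e2 : (∫ x in Ω, |f x| ^ p) = ∫ x in Ω, |g x| ^ p := by
    apply integral_congr_ae; filter_upwards [hfg] with y hy; rw [hy]
  simp_rw [e1, e2]
  exact key
end

section
/- Let f : Ω → ℝ be integrable on a cube K₀ ⊂ ℝⁿ and t > 0 with ∫_{K₀}|f| ≤ t|K₀|. Then there exists a countable collection of disjoint dyadic subcubes {Υ_l} of K₀ such that: (i) t < (1/|Υ_l|)∫_{Υ_l}|f| ≤ 2ⁿ t for each l, and (ii) |f| ≤ t almost everywhere on K₀ \ ∪_l Υ_l. -/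
open MeasureTheory Set
open scoped NNReal ENNReal

lemma czFloorDiv (u : ℝ) (d : ℤ) (hd : 0 < d) : ⌊u / (d:ℝ)⌋ = ⌊u⌋ / d := by
  have hd' : (0:ℝ) < d := by exact_mod_cast hd
  rw [Int.floor_eq_iff]
  have h1 : (⌊u⌋ / d) * d ≤ ⌊u⌋ := Int.ediv_mul_le _ (ne_of_gt hd)
  have h2 : ⌊u⌋ < (⌊u⌋ / d + 1) * d := Int.lt_ediv_add_one_mul_self _ hd
  have h3 : (⌊u⌋:ℝ) ≤ u := Int.floor_le u
  have h4 : u < (⌊u⌋:ℝ) + 1 := Int.lt_floor_add_one u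
  have h1' : ((⌊u⌋ / d : ℤ):ℝ) * d ≤ (⌊u⌋:ℝ) := by exact_mod_cast h1
  have h2' : (⌊u⌋:ℝ) + 1 ≤ ((⌊u⌋ / d : ℤ):ℝ) * d + d := by
    have hint : (⌊u⌋:ℝ) + 1 ≤ ((⌊u⌋ / d + 1 : ℤ):ℝ) * d := by
      exact_mod_cast (by omega : ⌊u⌋ + 1 ≤ (⌊u⌋ / d + 1) * d)
    push_cast at hint; linarith
  constructor
  · rw [le_div_iff₀ hd']; linarith
  · rw [div_lt_iff₀ hd']; push_cast; linarith

noncomputable def czCube (n : ℕ) (a : Fin n → ℝ) (s : ℝ) (k : ℕ) (j : Fin n → ℤ) :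
    Set (Fin n → ℝ) :=
  Set.univ.pi fun i => Set.Ico (a i + j i * (s / 2 ^ k)) (a i + j i * (s / 2 ^ k) + s / 2 ^ k)

noncomputable def czIdx (n : ℕ) (a : Fin n → ℝ) (s : ℝ) (k : ℕ) (x : Fin n → ℝ) : Fin n → ℤ :=
  fun i => ⌊(x i - a i) / (s / 2 ^ k)⌋

def czValid (n : ℕ) (k : ℕ) (j : Fin n → ℤ) : Prop := ∀ i, 0 ≤ j i ∧ j i < 2 ^ k

variable {n : ℕ} {a : Fin n → ℝ} {s : ℝ}

lemma mem_cube_iff (hs : 0 < s) {k : ℕ} {j : Fin n → ℤ} {x : Fin n → ℝ} :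
    x ∈ czCube n a s k j ↔ ∀ i, czIdx n a s k x i = j i := by
  have hδ : (0:ℝ) < s / 2 ^ k := by positivity
  simp only [czCube, Set.mem_pi, Set.mem_univ, forall_true_left, Set.mem_Ico, czIdx]
  refine forall_congr' fun i => ?_
  rw [Int.floor_eq_iff]
  constructor
  · rintro ⟨h1, h2⟩
    constructor
    · rw [le_div_iff₀ hδ]; linarith
    · rw [div_lt_iff₀ hδ]; push_cast; linarith
  · rintro ⟨h1, h2⟩
    rw [le_div_iff₀ hδ] at h1
    rw [div_lt_iff₀ hδ] at h2
    push_cast at h2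
    constructor <;> linarith

lemma self_mem_cube (hs : 0 < s) (k : ℕ) (x : Fin n → ℝ) :
    x ∈ czCube n a s k (czIdx n a s k x) := (mem_cube_iff hs).2 fun _ => rfl

lemma idx_div (hs : 0 < s) {k m : ℕ} (hkm : k ≤ m) (x : Fin n → ℝ) (i : Fin n) :
    czIdx n a s k x i = czIdx n a s m x i / 2 ^ (m - k) := by
  have h2 : (0:ℝ) < 2 ^ (m - k) := by positivity
  have key : (x i - a i) / (s / 2 ^ k) = ((x i - a i) / (s / 2 ^ m)) / ((2 ^ (m - k) : ℤ) : ℝ) := by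
    have : (2:ℝ) ^ m = 2 ^ k * 2 ^ (m - k) := by
      rw [← pow_add]; congr 1; omega
    push_cast
    field_simp
    rw [this]; ring
  rw [czIdx, key, czFloorDiv _ _ (by positivity)]
  rfl

lemma cube_subset_cube (hs : 0 < s) {k m : ℕ} (hkm : k ≤ m) (j : Fin n → ℤ) :
    czCube n a s m j ⊆ czCube n a s k (fun i => j i / 2 ^ (m - k)) := by
  intro y hy
  rw [mem_cube_iff hs] at hy ⊢
  intro i
  rw [idx_div hs hkm, hy i]

lemma volume_cube (hs : 0 < s) (k : ℕ) (j : Fin n → ℤ) :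
    volume (czCube n a s k j) = ENNReal.ofReal ((s / 2 ^ k) ^ n) := by
  rw [czCube, volume_pi_pi]
  simp only [Real.volume_Ico, add_sub_cancel_left]
  rw [Finset.prod_const, ENNReal.ofReal_pow (by positivity)]
  simp

lemma volume_cube_toReal (hs : 0 < s) (k : ℕ) (j : Fin n → ℤ) :
    (volume (czCube n a s k j)).toReal = (s / 2 ^ k) ^ n := by
  rw [volume_cube hs, ENNReal.toReal_ofReal (by positivity)]

lemma cube_subset_K0 (hs : 0 < s) {k : ℕ} {j : Fin n → ℤ} (hv : czValid n k j) :
    czCube n a s k j ⊆ Set.univ.pi fun i => Set.Ico (a i) (a i + s) := by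
  intro x hx
  simp only [czCube, Set.mem_pi, Set.mem_univ, forall_true_left, Set.mem_Ico] at hx ⊢
  intro i
  have hδ : (0:ℝ) < s / 2 ^ k := by positivity
  obtain ⟨h1, h2⟩ := hx i
  obtain ⟨hj0, hjk⟩ := hv i
  have hj0' : (0:ℝ) ≤ j i := by exact_mod_cast hj0
  have hjk' : (j i : ℝ) + 1 ≤ 2 ^ k := by exact_mod_cast hjk
  constructor
  · nlinarith
  · have : ((j i : ℝ) + 1) * (s / 2 ^ k) ≤ 2 ^ k * (s / 2 ^ k) :=
      mul_le_mul_of_nonneg_right hjk' (le_of_lt hδ)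
    have h2k : (2:ℝ) ^ k * (s / 2 ^ k) = s := by field_simp
    nlinarith

lemma valid_idx (hs : 0 < s) {k : ℕ} {x : Fin n → ℝ}
    (hx : x ∈ Set.univ.pi fun i => Set.Ico (a i) (a i + s)) : czValid n k (czIdx n a s k x) := by
  simp only [Set.mem_pi, Set.mem_univ, forall_true_left, Set.mem_Ico] at hx
  intro i
  have hδ : (0:ℝ) < s / 2 ^ k := by positivity
  obtain ⟨h1, h2⟩ := hx i
  constructor
  · exact Int.floor_nonneg.2 (div_nonneg (by linarith) hδ.le)
  · rw [czIdx, Int.floor_lt]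
    push_cast
    rw [div_lt_iff₀ hδ]
    have : (2:ℝ) ^ k * (s / 2 ^ k) = s := by field_simp
    linarith

lemma valid_div {k m : ℕ} (hkm : k ≤ m) {j : Fin n → ℤ} (hv : czValid n m j) :
    czValid n k (fun i => j i / 2 ^ (m - k)) := by
  intro i
  obtain ⟨h1, h2⟩ := hv i
  refine ⟨Int.ediv_nonneg h1 (by positivity), ?_⟩
  rw [Int.ediv_lt_iff_lt_mul (by positivity)]
  calc j i < 2 ^ m := h2
  _ = 2 ^ k * 2 ^ (m - k) := by rw [← pow_add]; congr 1; omega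

lemma measurableSet_cube (k : ℕ) (j : Fin n → ℤ) : MeasurableSet (czCube n a s k j) :=
  MeasurableSet.univ_pi fun _ => measurableSet_Ico


def czBad (n : ℕ) (a : Fin n → ℝ) (s : ℝ) (f : (Fin n → ℝ) → ℝ) (t : ℝ)
    (p : ℕ × (Fin n → ℤ)) : Prop :=
  t * (volume (czCube n a s p.1 p.2)).toReal < ∫ x in czCube n a s p.1 p.2, |f x|

def czSel (n : ℕ) (a : Fin n → ℝ) (s : ℝ) (f : (Fin n → ℝ) → ℝ) (t : ℝ)
    (p : ℕ × (Fin n → ℤ)) : Prop :=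
  czValid n p.1 p.2 ∧ czBad n a s f t p ∧
    ∀ k < p.1, ¬ czBad n a s f t (k, fun i => p.2 i / 2 ^ (p.1 - k))
open MeasureTheory in
/-- Calderón–Zygmund cube decomposition. -/
theorem stmt_16 (n : ℕ) (hn : 0 < n) (a : Fin n → ℝ) (s : ℝ) (hs : 0 < s)
    (K₀ : Set (Fin n → ℝ)) (hK₀ : K₀ = Set.univ.pi (fun i => Set.Ico (a i) (a i + s)))
    (f : (Fin n → ℝ) → ℝ) (hf : IntegrableOn f K₀)
    (t : ℝ) (ht : 0 < t) (havg : ∫ x in K₀, |f x| ≤ t * (volume K₀).toReal) :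
    ∃ (ι : Type) (_ : Countable ι) (Υ : ι → Set (Fin n → ℝ)),
      Pairwise (Function.onFun Disjoint Υ)
      ∧ (∀ l, Υ l ⊆ K₀)
      ∧ (∀ l, ∃ (c : Fin n → ℝ) (r : ℝ), 0 < r
            ∧ Υ l = Set.univ.pi (fun i => Set.Ico (c i) (c i + r)))
      ∧ (∀ l, t * (volume (Υ l)).toReal < ∫ x in Υ l, |f x|
            ∧ ∫ x in Υ l, |f x| ≤ 2^n * t * (volume (Υ l)).toReal)
      ∧ (∀ᵐ x ∂(volume.restrict (K₀ \ ⋃ l, Υ l)), |f x| ≤ t) := by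
  classical
  have hfabs : IntegrableOn (fun x => |f x|) K₀ := hf.abs
  have hsubK : ∀ {k : ℕ} {j : Fin n → ℤ}, czValid n k j → czCube n a s k j ⊆ K₀ := by
    intro k j hv; rw [hK₀]; exact cube_subset_K0 hs hv
  have key : ∀ p q (y : Fin n → ℝ), czSel n a s f t p → czSel n a s f t q → p.1 ≤ q.1 →
      y ∈ czCube n a s p.1 p.2 → y ∈ czCube n a s q.1 q.2 → p = q := by
    rintro ⟨k1, j1⟩ ⟨k2, j2⟩ y hp hq hpq hyp hyq
    simp only at hpq ⊢
    have hip : ∀ i, czIdx n a s k1 y i = j1 i := (mem_cube_iff hs).1 hyp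
    have hiq : ∀ i, czIdx n a s k2 y i = j2 i := (mem_cube_iff hs).1 hyq
    rcases eq_or_lt_of_le hpq with heq | hlt
    · subst heq
      have : j1 = j2 := by funext i; rw [← hip i, hiq i]
      rw [this]
    · exfalso
      have h1 : ¬ czBad n a s f t (k1, fun i => j2 i / 2 ^ (k2 - k1)) := hq.2.2 k1 hlt
      have h2 : (fun i => j2 i / 2 ^ (k2 - k1)) = j1 := by
        funext i
        rw [← hiq i, ← idx_div hs hpq y i, hip i]
      rw [h2] at h1
      exact h1 hp.2.1
  refine ⟨{p : ℕ × (Fin n → ℤ) // czSel n a s f t p}, inferInstance,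
    fun l => czCube n a s l.1.1 l.1.2, ?_, fun l => hsubK l.2.1, fun l =>
      ⟨fun i => a i + l.1.2 i * (s / 2 ^ l.1.1), s / 2 ^ l.1.1, by positivity, rfl⟩, ?_, ?_⟩
  · -- pairwise disjoint
    rintro ⟨p, hp⟩ ⟨q, hq⟩ hne
    rw [Function.onFun, Set.disjoint_left]
    intro y hyp hyq
    apply hne
    rcases le_total p.1 q.1 with h | h
    · exact Subtype.ext (key p q y hp hq h hyp hyq)
    · exact Subtype.ext (key q p y hq hp h hyq hyp).symm
  · -- bounds
    rintro ⟨⟨k, j⟩, hsel⟩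
    refine ⟨hsel.2.1, ?_⟩
    simp only
    match k with
    | 0 =>
      have hj0 : ∀ i, j i = 0 := by
        intro i
        have h : 0 ≤ j i ∧ j i < 2 ^ (0:ℕ) := hsel.1 i
        omega
      have hcube : czCube n a s 0 j = K₀ := by
        rw [hK₀, czCube]
        refine Set.pi_congr rfl fun i _ => ?_
        rw [hj0 i]
        norm_num
      rw [hcube]
      calc ∫ x in K₀, |f x| ≤ t * (volume K₀).toReal := havg
      _ ≤ 2 ^ n * t * (volume K₀).toReal := by
        have h1 : (1:ℝ) ≤ 2 ^ n := one_le_pow₀ (by norm_num)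
        have h2 : 0 ≤ (volume K₀).toReal := ENNReal.toReal_nonneg
        nlinarith [mul_nonneg ht.le h2]
    | (m + 1) =>
      have hlt : m < m + 1 := Nat.lt_succ_self m
      have hnb : ¬ czBad n a s f t (m, fun i => j i / 2 ^ (m + 1 - m)) := hsel.2.2 m hlt
      have hvpar : czValid n m (fun i => j i / 2 ^ (m + 1 - m)) := valid_div hlt.le hsel.1
      have hsub : czCube n a s (m+1) j ⊆ czCube n a s m (fun i => j i / 2 ^ (m + 1 - m)) :=
        cube_subset_cube hs hlt.le j
      have hIpar : IntegrableOn (fun x => |f x|) (czCube n a s m (fun i => j i / 2 ^ (m+1-m))) :=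
        hfabs.mono_set (hsubK hvpar)
      have hmono : ∫ x in czCube n a s (m+1) j, |f x| ≤
          ∫ x in czCube n a s m (fun i => j i / 2 ^ (m+1-m)), |f x| :=
        setIntegral_mono_set hIpar (Filter.Eventually.of_forall fun x => abs_nonneg _)
          (HasSubset.Subset.eventuallyLE hsub)
      have hnb' : ∫ x in czCube n a s m (fun i => j i / 2 ^ (m+1-m)), |f x| ≤
          t * (volume (czCube n a s m (fun i => j i / 2 ^ (m+1-m)))).toReal := le_of_not_gt hnb
      have hvol : t * (volume (czCube n a s m (fun i => j i / 2 ^ (m+1-m)))).toReal =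
          2 ^ n * t * (volume (czCube n a s (m+1) j)).toReal := by
        rw [volume_cube_toReal hs, volume_cube_toReal hs]
        have : s / 2 ^ m = 2 * (s / 2 ^ (m+1)) := by
          rw [pow_succ]; ring
        rw [this, mul_pow]; ring
      calc ∫ x in czCube n a s (m+1) j, |f x| ≤ _ := hmono
      _ ≤ _ := hnb'
      _ = _ := hvol
  · -- a.e. statement
    have hUmeas : MeasurableSet (⋃ l : {p // czSel n a s f t p}, czCube n a s l.1.1 l.1.2) :=
      MeasurableSet.iUnion fun l => measurableSet_cube _ _
    have hK0meas : MeasurableSet K₀ := by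
      rw [hK₀]; exact MeasurableSet.univ_pi fun _ => measurableSet_Ico
    have hgood : ∀ x ∈ K₀ \ ⋃ l : {p // czSel n a s f t p}, czCube n a s l.1.1 l.1.2,
        ∀ k, ¬ czBad n a s f t (k, czIdx n a s k x) := by
      intro x hx k hbad
      have hP : ∃ k, czBad n a s f t (k, czIdx n a s k x) := ⟨k, hbad⟩
      have hsel0 : czSel n a s f t (Nat.find hP, czIdx n a s (Nat.find hP) x) := by
        refine ⟨valid_idx hs (hK₀ ▸ hx.1), Nat.find_spec hP, fun k' hk' => ?_⟩
        have heq : (fun i => czIdx n a s (Nat.find hP) x i / 2 ^ (Nat.find hP - k')) =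
            czIdx n a s k' x := by
          funext i; rw [← idx_div hs (le_of_lt hk') x i]
        simp only at heq ⊢
        rw [heq]
        exact Nat.find_min hP hk'
      exact hx.2 (Set.mem_iUnion.2
        ⟨⟨(Nat.find hP, czIdx n a s (Nat.find hP) x), hsel0⟩, self_mem_cube hs _ x⟩)
    have hg : Integrable (K₀.indicator fun y => |f y|) volume :=
      (integrable_indicator_iff hK0meas).2 hfabs
    have hgloc : LocallyIntegrable (K₀.indicator fun y => |f y|) volume := hg.locallyIntegrable
    have hcoe : ((6:ℝ≥0) : ℝ≥0∞) = ENNReal.ofReal (6:ℝ) := by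
      norm_num
    have hcoe2 : (((6:ℝ≥0) ^ n : ℝ≥0) : ℝ≥0∞) = ENNReal.ofReal ((6:ℝ) ^ n) := by
      rw [ENNReal.ofReal_pow (by norm_num), ENNReal.coe_pow]
      norm_num
    have hdbl : ∀ x : Fin n → ℝ, ∃ᶠ r in nhdsWithin 0 (Set.Ioi 0),
        volume (Metric.closedBall x (3 * r)) ≤ ((6:ℝ≥0) ^ n) * volume (Metric.closedBall x r) := by
      intro x
      apply Filter.Eventually.frequently
      filter_upwards [self_mem_nhdsWithin] with r hr
      have hr0 : (0:ℝ) < r := hr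
      rw [Real.volume_pi_closedBall _ (by positivity : (0:ℝ) ≤ 3 * r),
        Real.volume_pi_closedBall _ hr0.le]
      rw [hcoe, ← ENNReal.ofReal_pow (by norm_num), ← ENNReal.ofReal_mul (by positivity)]
      apply ENNReal.ofReal_le_ofReal
      rw [Fintype.card_fin]
      calc (2 * (3 * r)) ^ n = (6:ℝ) ^ n * r ^ n := by
            rw [(show 2 * (3 * r) = 6 * r by ring), mul_pow]
      _ ≤ (6:ℝ) ^ n * (2 * r) ^ n :=
        mul_le_mul_of_nonneg_left (pow_le_pow_left₀ hr0.le (by linarith) n) (by positivity)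
    set vit : VitaliFamily volume := Vitali.vitaliFamily volume ((6:ℝ≥0) ^ n) hdbl with hvit
    rw [ae_restrict_iff' (hK0meas.diff hUmeas)]
    filter_upwards [vit.ae_tendsto_average hgloc] with x hx hmem
    have hiK : x ∈ Set.univ.pi fun i => Set.Ico (a i) (a i + s) := hK₀ ▸ hmem.1
    have hgd := hgood x hmem
    set g : (Fin n → ℝ) → ℝ := K₀.indicator fun y => |f y| with hgdef
    set Qc : ℕ → Set (Fin n → ℝ) := fun k => Set.univ.pi fun i =>
      Set.Icc (a i + (czIdx n a s k x i : ℝ) * (s / 2 ^ k))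
        (a i + (czIdx n a s k x i : ℝ) * (s / 2 ^ k) + s / 2 ^ k) with hQc
    have hDQc : ∀ k, czCube n a s k (czIdx n a s k x) ⊆ Qc k := fun k =>
      Set.pi_mono fun i _ => Set.Ico_subset_Icc_self
    have hxD : ∀ k, x ∈ czCube n a s k (czIdx n a s k x) := fun k => self_mem_cube hs k x
    have hDsub : ∀ k, czCube n a s k (czIdx n a s k x) ⊆ K₀ := fun k => by
      rw [hK₀]; exact cube_subset_K0 hs (valid_idx hs hiK)
    have volQc : ∀ k, volume (Qc k) = ENNReal.ofReal ((s / 2 ^ k) ^ n) := by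
      intro k
      rw [hQc]
      simp only
      rw [volume_pi_pi]
      simp only [Real.volume_Icc, add_sub_cancel_left]
      rw [Finset.prod_const, ENNReal.ofReal_pow (by positivity)]
      simp
    have haeq : ∀ k, czCube n a s k (czIdx n a s k x) =ᵐ[volume] Qc k := by
      intro k
      refine ae_eq_of_subset_of_measure_ge (hDQc k) ?_ ?_ ?_
      · rw [volQc k, volume_cube hs]
      · exact (measurableSet_cube _ _).nullMeasurableSet
      · rw [volQc k]; exact ENNReal.ofReal_ne_top
    have hbound : ∀ k, ⨍ y in Qc k, g y ≤ t := by
      intro k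
      have hint : ∫ y in Qc k, g y = ∫ y in czCube n a s k (czIdx n a s k x), |f y| := by
        rw [setIntegral_congr_set (haeq k).symm]
        exact setIntegral_congr_fun (measurableSet_cube _ _)
          fun y hy => Set.indicator_of_mem (hDsub k hy) _
      have hnb : ∫ y in czCube n a s k (czIdx n a s k x), |f y| ≤ t * (s / 2 ^ k) ^ n := by
        have := le_of_not_gt (hgd k)
        rwa [volume_cube_toReal hs] at this
      rw [setAverage_eq, measureReal_def, volQc k, ENNReal.toReal_ofReal (by positivity), hint]
      have hpos : (0:ℝ) < (s / 2 ^ k) ^ n := by positivity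
      rw [smul_eq_mul, inv_mul_le_iff₀ hpos]
      nlinarith [hnb]
    have hsubball : ∀ k, Qc k ⊆ Metric.closedBall x (s / 2 ^ k) := by
      intro k y hy
      have hδ : (0:ℝ) < s / 2 ^ k := by positivity
      rw [Metric.mem_closedBall, dist_pi_le_iff hδ.le]
      intro i
      have hyi := hy i (Set.mem_univ i)
      have hxi := (hDQc k) (hxD k) i (Set.mem_univ i)
      simp only [Set.mem_Icc] at hyi hxi
      rw [Real.dist_eq, abs_sub_le_iff]
      constructor <;> linarith [hyi.1, hyi.2, hxi.1, hxi.2]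
    have hten : Filter.Tendsto Qc Filter.atTop (vit.filterAt x) := by
      rw [VitaliFamily.tendsto_filterAt_iff]
      constructor
      · apply Filter.Eventually.of_forall
        intro k
        have hδ : (0:ℝ) < s / 2 ^ k := by positivity
        refine ⟨?_, ?_, s / 2 ^ k, hsubball k, ?_⟩
        · exact isClosed_set_pi fun i _ => isClosed_Icc
        · refine Set.Nonempty.mono ((isOpen_set_pi Set.finite_univ
            fun i _ => isOpen_Ioo).subset_interior_iff.2
            (Set.pi_mono fun i _ => Set.Ioo_subset_Icc_self)) ?_
          refine Set.univ_pi_nonempty_iff.2 fun i =>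
            ⟨a i + (czIdx n a s k x i : ℝ) * (s / 2 ^ k) + (s / 2 ^ k) / 2, ?_⟩
          constructor <;> [linarith [half_pos hδ]; linarith [half_lt_self hδ]]
        · rw [Real.volume_pi_closedBall _ (by positivity : (0:ℝ) ≤ 3 * (s / 2 ^ k)), volQc k]
          rw [hcoe2, ← ENNReal.ofReal_mul (by positivity)]
          apply ENNReal.ofReal_le_ofReal
          rw [Fintype.card_fin]
          exact le_of_eq (by
            rw [(show 2 * (3 * (s / 2 ^ k)) = 6 * (s / 2 ^ k) by ring), mul_pow])
      · intro ε hε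
        have htend : Filter.Tendsto (fun k : ℕ => s / 2 ^ k) Filter.atTop (nhds 0) := by
          have h2 : Filter.Tendsto (fun k : ℕ => ((1:ℝ)/2) ^ k) Filter.atTop (nhds 0) :=
            tendsto_pow_atTop_nhds_zero_of_lt_one (by norm_num) (by norm_num)
          have := h2.const_mul s
          simp only [mul_zero] at this
          refine this.congr fun k => ?_
          rw [div_pow, one_pow, div_eq_mul_inv, div_eq_mul_inv, one_mul]
        filter_upwards [htend.eventually_le_const hε] with k hk
        exact (hsubball k).trans (Metric.closedBall_subset_closedBall hk)
    have hlim := hx.comp hten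
    have hgx : g x = |f x| := Set.indicator_of_mem hmem.1 _
    have hfin := le_of_tendsto hlim (Filter.Eventually.of_forall hbound)
    rwa [hgx] at hfin
end
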